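/- arXiv:2409.13608 — 5 statements merged into one kernel-verified Lean document; each statement's English description precedes it below -/
import Mathlib

section
/- Suppose v̂ ∈ ℝ^{m₁} is a solution of the MPAERL model, i.e. a minimizer of f(v) + g(v) over the set {v ∈ ℝ^{m₁} : Dv ≥ d componentwise}. Then for every β > 0 and η > 0 there exists y ∈ ℝ^{m₂} such that the vector z = (v̂; y) ∈ ℝ^{m₁+m₂} is a fixed point of the operator T_{β,η}, i.e. v̂ = prox_{βg}(v̂ − β(∇f(v̂) + Dᵀy)) and y = prox_{η ι_d*}(y + ηDv̂). -/
noncomputable section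

open scoped BigOperators

/-- `ℝ^n` with the Euclidean structure. -/
abbrev Euc (n : ℕ) := EuclideanSpace ℝ (Fin n)

/-- Matrix–vector multiplication, landing in Euclidean space. -/
def mVec {p q : ℕ} (A : Matrix (Fin p) (Fin q) ℝ) (v : Euc q) : Euc p :=
  WithLp.toLp 2 (fun i => ∑ j, A i j * v j)

/-- The set of proximity points of an extended-real-valued function `ψ` at `x`:
`prox_ψ(x) = argmin_u {½‖u−x‖² + ψ(u)}`. -/
def proxSet {n : ℕ} (ψ : Euc n → EReal) (x : Euc n) : Set (Euc n) :=
  {p | ∀ u : Euc n,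
    ((1 / 2 * ‖p - x‖ ^ 2 : ℝ) : EReal) + ψ p ≤ ((1 / 2 * ‖u - x‖ ^ 2 : ℝ) : EReal) + ψ u}

/-- The indicator function `ι_d` of the set `{x | x ≥ d}` (componentwise). -/
def iotaInd {n : ℕ} (d : Euc n) : Euc n → EReal :=
  fun y => if ∀ i, d i ≤ y i then (0 : EReal) else ⊤

/-- The convex (Fenchel) conjugate `ψ*(x) = sup_u {⟨x,u⟩ − ψ(u)}`. -/
def conjFn {n : ℕ} (ψ : Euc n → EReal) : Euc n → EReal :=
  fun x => ⨆ u : Euc n, (((inner ℝ x u : ℝ) : EReal) - ψ u)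

open Set Pointwise

variable {E : Type*} [NormedAddCommGroup E] [InnerProductSpace ℝ E] [FiniteDimensional ℝ E]

local notation "⟪" x ", " y "⟫" => @inner ℝ _ _ x y

namespace Kkt

variable (h : E → ℝ)

/-- slope set -/
def Sl (x u : E) : Set ℝ := (fun t : ℝ => (h (x + t • u) - h x) / t) '' Ioi 0

def q (x u : E) : ℝ := sInf (Sl h x u)

variable {h}

lemma aux_slope {A B C s t : ℝ} (hs : 0 < s) (ht : 0 < t)
    (key : A ≤ (1 - s/t) * B + s/t * C) : (A - B) * t ≤ (C - B) * s := by
  have h1 : (1 - s/t) * B + s/t * C = B + (s/t) * (C - B) := by ring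
  rw [h1] at key
  have h2 : A - B ≤ (s/t) * (C - B) := by linarith
  calc (A - B) * t ≤ ((s/t)*(C-B))*t := mul_le_mul_of_nonneg_right h2 ht.le
    _ = (C - B) * s := by field_simp

lemma slope_mono (hconv : ConvexOn ℝ Set.univ h) (x u : E) {s t : ℝ} (hs : 0 < s) (hst : s ≤ t) :
    (h (x + s • u) - h x) / s ≤ (h (x + t • u) - h x) / t := by
  have ht : 0 < t := lt_of_lt_of_le hs hst
  have key : h (x + s • u) ≤ (1 - s / t) * h x + (s / t) * h (x + t • u) := by
    have h1 : (1 - s / t) • x + (s / t) • (x + t • u) = x + s • u := by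
      have : (s / t) * t = s := div_mul_cancel₀ s ht.ne'
      rw [smul_add, smul_smul, this]
      module
    have hle1 : s / t ≤ 1 := (div_le_one ht).2 hst
    have := hconv.2 (Set.mem_univ x) (Set.mem_univ (x + t • u))
      (show (0:ℝ) ≤ 1 - s / t by linarith) (show (0:ℝ) ≤ s / t by positivity)
      (show (1 - s / t) + s / t = 1 by ring)
    rw [h1] at this
    simpa [smul_eq_mul] using this
  rw [div_le_div_iff₀ hs ht]
  exact aux_slope hs ht key

lemma Sl_nonempty (x u : E) : (Sl h x u).Nonempty := ⟨_, ⟨1, by norm_num, rfl⟩⟩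

lemma Sl_bddBelow (hconv : ConvexOn ℝ Set.univ h) (x u : E) : BddBelow (Sl h x u) := by
  refine ⟨h x - h (x - u), ?_⟩
  rintro r ⟨t, ht, rfl⟩
  rw [mem_Ioi] at ht
  have h1t : (0:ℝ) < 1 + t := by positivity
  have h1 : (t / (1 + t)) • (x - u) + (1 / (1 + t)) • (x + t • u) = x := by
    match_scalars <;> field_simp <;> ring
  have := hconv.2 (Set.mem_univ (x - u)) (Set.mem_univ (x + t • u))
    (show (0:ℝ) ≤ t / (1 + t) by positivity) (show (0:ℝ) ≤ 1 / (1 + t) by positivity)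
    (show t / (1 + t) + 1 / (1 + t) = 1 by field_simp; ring)
  rw [h1] at this
  show h x - h (x - u) ≤ (h (x + t • u) - h x) / t
  rw [le_div_iff₀ ht]
  simp only [smul_eq_mul] at this
  have h4 : (1+t) * h x ≤ t * h (x-u) + h (x + t • u) := by
    calc (1+t)*h x ≤ (1+t)*(t/(1+t) * h (x-u) + 1/(1+t) * h (x + t • u)) :=
          mul_le_mul_of_nonneg_left this h1t.le
      _ = t * h (x-u) + h (x + t • u) := by field_simp
  linarith

lemma q_le_slope (hconv : ConvexOn ℝ Set.univ h) (x u : E) {t : ℝ} (ht : 0 < t) :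
    q h x u ≤ (h (x + t • u) - h x) / t :=
  csInf_le (Sl_bddBelow hconv x u) ⟨t, ht, rfl⟩

lemma q_le (hconv : ConvexOn ℝ Set.univ h) (x u : E) : q h x u ≤ h (x + u) - h x := by
  simpa using q_le_slope hconv x u one_pos

lemma q_zero (x : E) : q h x 0 = 0 := by
  have : Sl h x 0 = {0} := by
    ext r
    constructor
    · rintro ⟨t, ht, rfl⟩; simp
    · rintro rfl; exact ⟨1, by norm_num, by simp⟩
  rw [q, this, csInf_singleton]

lemma q_smul (x u : E) {c : ℝ} (hc : 0 < c) : q h x (c • u) = c * q h x u := by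
  have : Sl h x (c • u) = c • Sl h x u := by
    ext r
    constructor
    · rintro ⟨t, ht, rfl⟩
      rw [mem_Ioi] at ht
      refine ⟨(h (x + (t * c) • u) - h x) / (t * c), ⟨t * c, Set.mem_Ioi.2 (by positivity), rfl⟩, ?_⟩
      simp only [smul_eq_mul, smul_smul]
      rw [mul_comm t c]
      field_simp
    · rintro ⟨r', ⟨t, ht, rfl⟩, rfl⟩
      rw [mem_Ioi] at ht
      refine ⟨t / c, Set.mem_Ioi.2 (by positivity), ?_⟩
      simp only [smul_eq_mul, smul_smul]
      rw [div_mul_cancel₀ _ hc.ne']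
      field_simp
  rw [q, this, Real.sInf_smul_of_nonneg hc.le, smul_eq_mul]; rfl

lemma q_add (hconv : ConvexOn ℝ Set.univ h) (x u v : E) :
    q h x (u + v) ≤ q h x u + q h x v := by
  have key : ∀ r₁ ∈ Sl h x u, ∀ r₂ ∈ Sl h x v, q h x (u + v) ≤ r₁ + r₂ := by
    rintro _ ⟨t₁, ht₁, rfl⟩ _ ⟨t₂, ht₂, rfl⟩
    rw [mem_Ioi] at ht₁ ht₂
    set t := min t₁ t₂ / 2 with htdef
    have ht : 0 < t := by positivity
    have h2t₁ : 2 * t ≤ t₁ := by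
      rw [htdef]; have := min_le_left t₁ t₂; linarith
    have h2t₂ : 2 * t ≤ t₂ := by
      rw [htdef]; have := min_le_right t₁ t₂; linarith
    have hmid : h (x + t • (u + v)) ≤ 1/2 * h (x + (2*t) • u) + 1/2 * h (x + (2*t) • v) := by
      have h1 : (1/2 : ℝ) • (x + (2*t) • u) + (1/2 : ℝ) • (x + (2*t) • v) = x + t • (u + v) := by
        match_scalars <;> ring
      have := hconv.2 (Set.mem_univ (x + (2*t) • u)) (Set.mem_univ (x + (2*t) • v))
        (show (0:ℝ) ≤ 1/2 by norm_num) (show (0:ℝ) ≤ 1/2 by norm_num)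
        (show (1:ℝ)/2 + 1/2 = 1 by norm_num)
      rw [h1] at this
      simpa [smul_eq_mul] using this
    have step : (h (x + t • (u + v)) - h x) / t
        ≤ (h (x + (2*t) • u) - h x) / (2*t) + (h (x + (2*t) • v) - h x) / (2*t) := by
      rw [← add_div, div_le_div_iff₀ ht (by positivity)]
      nlinarith
    calc q h x (u + v) ≤ (h (x + t • (u + v)) - h x) / t := q_le_slope hconv x _ ht
      _ ≤ (h (x + (2*t) • u) - h x) / (2*t) + (h (x + (2*t) • v) - h x) / (2*t) := step
      _ ≤ (h (x + t₁ • u) - h x) / t₁ + (h (x + t₂ • v) - h x) / t₂ := by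
          gcongr (?_ + ?_)
          · exact slope_mono hconv x u (by positivity) h2t₁
          · exact slope_mono hconv x v (by positivity) h2t₂
  have step1 : ∀ r₂ ∈ Sl h x v, q h x (u + v) - r₂ ≤ q h x u := by
    intro r₂ hr₂
    refine le_csInf (Sl_nonempty x u) fun r₁ hr₁ => ?_
    linarith [key r₁ hr₁ r₂ hr₂]
  have : q h x (u + v) - q h x u ≤ q h x v := by
    refine le_csInf (Sl_nonempty x v) fun r₂ hr₂ => ?_
    linarith [step1 r₂ hr₂]
  linarith

end Kkt
section P2
open Set Filter

variable {E : Type*} [NormedAddCommGroup E] [InnerProductSpace ℝ E] [FiniteDimensional ℝ E]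
namespace Kkt

variable {h : E → ℝ}

lemma q_nonneg_of_eventually (hconv : ConvexOn ℝ Set.univ h) (x w : E)
    (hw : ∀ᶠ t : ℝ in nhdsWithin (0:ℝ) (Ioi (0:ℝ)), h x ≤ h (x + t • w)) : 0 ≤ q h x w := by
  refine le_csInf (Sl_nonempty x w) ?_
  rintro r ⟨t, ht, rfl⟩
  rw [mem_Ioi] at ht
  have hS : ∀ᶠ z : ℝ in nhdsWithin (0:ℝ) (Ioi (0:ℝ)), z ∈ Ioo 0 t :=
    Ioo_mem_nhdsGT_of_mem (show (0:ℝ) ∈ Ico 0 t from ⟨le_refl 0, ht⟩)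
  obtain ⟨t', ht'⟩ := (hw.and hS).exists
  have hle := ht'.1
  have ht'0 : 0 < t' := ht'.2.1
  have ht't : t' < t := ht'.2.2
  have h1 : 0 ≤ (h (x + t' • w) - h x) / t' := by
    apply div_nonneg _ ht'0.le
    linarith
  calc (0:ℝ) ≤ (h (x + t' • w) - h x) / t' := h1
    _ ≤ (h (x + t • w) - h x) / t := slope_mono hconv x w ht'0 ht't.le

lemma exists_subgradient_dir (hconv : ConvexOn ℝ Set.univ h) (x w : E)
    (hw : ∀ᶠ t : ℝ in nhdsWithin (0:ℝ) (Ioi (0:ℝ)), h x ≤ h (x + t • w)) :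
    ∃ s : E, (∀ u, h x + ⟪s, u⟫ ≤ h (x + u)) ∧ 0 ≤ ⟪s, w⟫ := by
  have H : ∀ c : ℝ, c • w = 0 → c • (q h x w) = 0 := by
    intro c hc
    rcases smul_eq_zero.1 hc with rfl | rfl
    · simp
    · simp [q_zero]
  set f₀ := LinearPMap.mkSpanSingleton' (σ := RingHom.id ℝ) w (q h x w) H with hf₀
  have hf : ∀ z : f₀.domain, f₀ z ≤ q h x z := by
    rintro ⟨z1, hz⟩
    have hz' : z1 ∈ Submodule.span ℝ {w} := hz
    obtain ⟨c, rfl⟩ := Submodule.mem_span_singleton.1 hz'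
    rw [LinearPMap.mkSpanSingleton'_apply, RingHom.id_apply]
    rcases lt_trichotomy c 0 with hc | rfl | hc
    · have h0 : q h x 0 = 0 := q_zero x
      have hsum : q h x (c • w + (-c) • w) ≤ q h x (c • w) + q h x ((-c) • w) := by
        exact q_add hconv x _ _
      rw [q_smul x w (by linarith : (0:ℝ) < -c)] at hsum
      have : c • w + (-c) • w = 0 := by module
      rw [this, h0] at hsum
      simp only [smul_eq_mul]
      linarith
    · simp [q_zero]
    · rw [q_smul x w hc]; simp [smul_eq_mul]
  obtain ⟨gl, hgl_eq, hgl_le⟩ := exists_extension_of_le_sublinear f₀ (q h x)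
    (fun c hc u => q_smul x u hc) (q_add hconv x) hf
  set s := (InnerProductSpace.toDual ℝ E).symm (LinearMap.toContinuousLinearMap gl) with hs
  have hinner : ∀ u, ⟪s, u⟫ = gl u := by
    intro u
    rw [hs, InnerProductSpace.toDual_symm_apply]
    rfl
  refine ⟨s, fun u => ?_, ?_⟩
  · have h1 : gl u ≤ q h x u := hgl_le u
    have h2 := q_le hconv x u
    rw [hinner u]
    linarith
  · have hwmem : w ∈ f₀.domain := by
      rw [hf₀, LinearPMap.domain_mkSpanSingleton]
      exact Submodule.mem_span_singleton_self w
    have h1 : gl w = f₀ ⟨w, hwmem⟩ := hgl_eq ⟨w, hwmem⟩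
    have h2 : f₀ ⟨w, hwmem⟩ = q h x w := LinearPMap.mkSpanSingleton'_apply_self w _ H _
    rw [hinner w, h1, h2]
    exact q_nonneg_of_eventually hconv x w hw

end Kkt
end P2
section P3
open Set Finset

variable {E : Type*} [NormedAddCommGroup E] [InnerProductSpace ℝ E] [FiniteDimensional ℝ E]

namespace Kkt

def coneGen {n : ℕ} (a : Fin n → E) : Set E :=
  {x | ∃ l : Fin n → ℝ, (∀ i, 0 ≤ l i) ∧ x = ∑ i, l i • a i}

lemma cara {n : ℕ} (a : Fin n → E) (t : Finset (Fin n)) :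
    ∀ l : Fin n → ℝ, (∀ i, 0 ≤ l i) →
    ∃ t' : Finset (Fin n), LinearIndependent ℝ (fun i : t' => a i) ∧
      ∃ l' : Fin n → ℝ, (∀ i, 0 ≤ l' i) ∧ ∑ i ∈ t', l' i • a i = ∑ i ∈ t, l i • a i := by
  induction t using Finset.strongInductionOn with
  | _ t IH =>
  intro l hl
  by_cases hind : LinearIndependent ℝ (fun i : t => a i)
  · exact ⟨t, hind, l, hl, rfl⟩
  · obtain ⟨g, hg0, i₁, hgi₁⟩ := Fintype.not_linearIndependent_iff.1 hind
    set μ : Fin n → ℝ := fun i => if hi : i ∈ t then g ⟨i, hi⟩ else 0 with hμ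
    have hμsum : ∑ i ∈ t, μ i • a i = 0 := by
      rw [← Finset.sum_coe_sort t (fun i => μ i • a i), ← hg0]
      refine Finset.sum_congr rfl fun i _ => ?_
      simp [hμ, i.2]
    have main : ∀ ν : Fin n → ℝ, ∑ i ∈ t, ν i • a i = 0 → ∀ i₀, i₀ ∈ t → 0 < ν i₀ →
        ∃ t' : Finset (Fin n), LinearIndependent ℝ (fun i : t' => a i) ∧
          ∃ l' : Fin n → ℝ, (∀ i, 0 ≤ l' i) ∧ ∑ i ∈ t', l' i • a i = ∑ i ∈ t, l i • a i := by
      intro ν hνsum i₀ hi₀t hνi₀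
      obtain ⟨j, hjP, hjmin⟩ := (t.filter (fun i => 0 < ν i)).exists_min_image
        (fun i => l i / ν i) ⟨i₀, Finset.mem_filter.2 ⟨hi₀t, hνi₀⟩⟩
      have hjt : j ∈ t := (Finset.mem_filter.1 hjP).1
      have hνj : 0 < ν j := (Finset.mem_filter.1 hjP).2
      set c : ℝ := l j / ν j with hc
      have hc0 : 0 ≤ c := div_nonneg (hl j) hνj.le
      set l' : Fin n → ℝ := fun i => if i ∈ t then l i - c * ν i else 0 with hl'def
      have hl' : ∀ i, 0 ≤ l' i := by
        intro i
        rw [hl'def]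
        dsimp only
        split_ifs with hit
        · rcases le_or_gt (ν i) 0 with hν | hν
          · nlinarith [hl i]
          · have h6 := hjmin i (Finset.mem_filter.2 ⟨hit, hν⟩)
            have h5 : c * ν i ≤ l i := (le_div_iff₀ hν).1 h6
            linarith
        · exact le_refl 0
      have hl'j : l' j = 0 := by
        rw [hl'def]
        dsimp only
        rw [if_pos hjt, hc, div_mul_cancel₀ _ hνj.ne']
        ring
      have hsum : ∑ i ∈ t.erase j, l' i • a i = ∑ i ∈ t, l i • a i := by
        have h1 : ∑ i ∈ t.erase j, l' i • a i + l' j • a j = ∑ i ∈ t, l' i • a i :=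
          Finset.sum_erase_add t _ hjt
        have h2 : ∑ i ∈ t, l' i • a i = ∑ i ∈ t, l i • a i - c • ∑ i ∈ t, ν i • a i := by
          rw [Finset.smul_sum, ← Finset.sum_sub_distrib]
          refine Finset.sum_congr rfl fun i hit => ?_
          rw [hl'def]
          dsimp only
          rw [if_pos hit, sub_smul, smul_smul]
        rw [hl'j, zero_smul, add_zero] at h1
        rw [h1, h2, hνsum, smul_zero, sub_zero]
      obtain ⟨t', hind', l'', hl'', hsum''⟩ := IH (t.erase j) (Finset.erase_ssubset hjt) l' hl'
      exact ⟨t', hind', l'', hl'', by rw [hsum'', hsum]⟩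
    have hμi₁ : μ ↑i₁ ≠ 0 := by
      rw [hμ]
      dsimp only
      rw [dif_pos i₁.2]
      simpa using hgi₁
    rcases lt_or_gt_of_ne hμi₁ with hneg | hpos
    · refine main (fun i => -μ i) ?_ ↑i₁ i₁.2 (show (0:ℝ) < -μ ↑i₁ by linarith)
      have : ∑ i ∈ t, (fun i => -μ i) i • a i = -∑ i ∈ t, μ i • a i := by
        rw [← Finset.sum_neg_distrib]
        exact Finset.sum_congr rfl fun i _ => by rw [neg_smul]
      rw [this, hμsum, neg_zero]
    · exact main μ hμsum ↑i₁ i₁.2 hpos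

end Kkt
end P3
section P4
open Set Finset

variable {E : Type*} [NormedAddCommGroup E] [InnerProductSpace ℝ E] [FiniteDimensional ℝ E]

namespace Kkt

lemma isClosed_coneGen {n : ℕ} (a : Fin n → E) : IsClosed (coneGen a) := by
  have key : coneGen a = ⋃ t ∈ {t : Finset (Fin n) | LinearIndependent ℝ (fun i : t => a i)},
      {x | ∃ l : Fin n → ℝ, (∀ i, 0 ≤ l i) ∧ x = ∑ i ∈ t, l i • a i} := by
    ext x
    constructor
    · rintro ⟨l, hl, rfl⟩
      obtain ⟨t', hind, l', hl', hsum⟩ := cara a Finset.univ l hl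
      exact Set.mem_biUnion hind ⟨l', hl', by rw [hsum]⟩
    · rintro ⟨S, ⟨t, rfl⟩, hx⟩
      simp only [Set.mem_iUnion, Set.mem_setOf_eq] at hx
      obtain ⟨hind, l, hl, rfl⟩ := hx
      refine ⟨fun i => if i ∈ t then l i else 0,
        fun i => by dsimp only; split_ifs with hi; exacts [hl i, le_refl 0], ?_⟩
      have : ∀ i : Fin n, (if i ∈ t then l i else 0) • a i = if i ∈ t then l i • a i else 0 := by
        intro i; split_ifs <;> simp
      calc ∑ i ∈ t, l i • a i = ∑ i : Fin n, if i ∈ t then l i • a i else 0 := by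
            rw [Finset.sum_ite_mem, Finset.univ_inter]
        _ = ∑ i : Fin n, (fun i => if i ∈ t then l i else 0) i • a i := by
            exact Finset.sum_congr rfl fun i _ => (this i).symm
  rw [key]
  refine Set.Finite.isClosed_biUnion (Set.toFinite _) fun t hind => ?_
  -- the linear map sending coefficients to combinations
  set T : (↥t → ℝ) →ₗ[ℝ] E :=
    { toFun := fun l => ∑ i : ↥t, l i • a ↑i
      map_add' := by
        intro l₁ l₂
        rw [← Finset.sum_add_distrib]
        exact Finset.sum_congr rfl fun i _ => add_smul _ _ _
      map_smul' := by
        intro c l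
        rw [RingHom.id_apply, Finset.smul_sum]
        exact Finset.sum_congr rfl fun i _ => smul_smul c (l i) (a ↑i) |>.symm ▸ rfl } with hT
  have hTinj : LinearMap.ker T = ⊥ := by
    rw [LinearMap.ker_eq_bot']
    intro m hm
    funext i
    exact Fintype.linearIndependent_iff.1 hind m hm i
  have himg : {x : E | ∃ l : Fin n → ℝ, (∀ i, 0 ≤ l i) ∧ x = ∑ i ∈ t, l i • a i}
      = T '' {l : ↥t → ℝ | ∀ i, 0 ≤ l i} := by
    ext x
    constructor
    · rintro ⟨l, hl, rfl⟩
      refine ⟨fun i => l ↑i, fun i => hl ↑i, ?_⟩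
      show ∑ i : ↥t, l ↑i • a ↑i = ∑ i ∈ t, l i • a i
      exact Finset.sum_coe_sort t (fun i => l i • a i)
    · rintro ⟨l, hl, rfl⟩
      refine ⟨fun i => if hi : i ∈ t then l ⟨i, hi⟩ else 0, ?_, ?_⟩
      · intro i
        dsimp only
        split_ifs with hi
        · exact hl _
        · exact le_refl 0
      · show (∑ i : ↥t, l i • a ↑i) = _
        rw [← Finset.sum_coe_sort t (fun i => (if hi : i ∈ t then l ⟨i, hi⟩ else 0) • a i)]
        refine Finset.sum_congr rfl fun i _ => ?_
        rw [dif_pos i.2]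
  rw [himg]
  have hK : IsClosed {l : ↥t → ℝ | ∀ i, 0 ≤ l i} := by
    have : {l : ↥t → ℝ | ∀ i, 0 ≤ l i} = ⋂ i, {l : ↥t → ℝ | 0 ≤ l i} := by
      ext l; simp [Set.mem_iInter]
    rw [this]
    exact isClosed_iInter fun i => isClosed_le continuous_const (continuous_apply i)
  exact (LinearMap.isClosedEmbedding_of_injective hTinj).isClosedMap _ hK

end Kkt
end P4
section P5
open Set Filter Bornology

variable {E : Type*} [NormedAddCommGroup E] [InnerProductSpace ℝ E] [FiniteDimensional ℝ E]
namespace Kkt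

lemma convex_coneGen {n : ℕ} (a : Fin n → E) : Convex ℝ (coneGen a) := by
  rintro x ⟨lx, hlx, rfl⟩ y ⟨ly, hly, rfl⟩ θ σ hθ hσ hsum
  refine ⟨fun i => θ * lx i + σ * ly i,
    fun i => add_nonneg (mul_nonneg hθ (hlx i)) (mul_nonneg hσ (hly i)), ?_⟩
  rw [Finset.smul_sum, Finset.smul_sum, ← Finset.sum_add_distrib]
  refine Finset.sum_congr rfl fun i _ => ?_
  rw [add_smul, smul_smul, smul_smul]

lemma kkt_main {n : ℕ} (a : Fin n → E) (d : Fin n → ℝ) (h : E → ℝ)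
    (hconv : ConvexOn ℝ Set.univ h) (hcont : Continuous h) (p : E)
    (hfeas : ∀ i, d i ≤ ⟪a i, p⟫)
    (hmin : ∀ v, (∀ i, d i ≤ ⟪a i, v⟫) → h p ≤ h v) :
    ∃ l : Fin n → ℝ, (∀ i, 0 ≤ l i) ∧ (∀ i, ⟪a i, p⟫ ≠ d i → l i = 0) ∧
      ∀ u, h p + ⟪∑ i, l i • a i, u⟫ ≤ h (p + u) := by
  classical
  set a' : Fin n → E := fun i => if ⟪a i, p⟫ = d i then a i else 0 with ha'
  set C : Set E := {s | ∀ u, h p + ⟪s, u⟫ ≤ h (p + u)} with hC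
  set G : Set E := coneGen a' with hG
  -- step 1 : C ∩ G nonempty
  have hne : (C ∩ G).Nonempty := by
    by_contra hdisj
    rw [Set.not_nonempty_iff_eq_empty] at hdisj
    -- C is compact convex, G is closed convex
    have hCclosed : IsClosed C := by
      have : C = ⋂ u, {s : E | h p + ⟪s, u⟫ ≤ h (p + u)} := by
        ext s; simp [hC, Set.mem_iInter]
      rw [this]
      exact isClosed_iInter fun u => isClosed_le
        (continuous_const.add (continuous_id.inner continuous_const)) continuous_const
    have hCbdd : IsBounded C := by
      obtain ⟨z₀, hz₀mem, hz₀max⟩ := (isCompact_closedBall p 1).exists_isMaxOn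
        ⟨p, Metric.mem_closedBall_self zero_le_one⟩ hcont.continuousOn
      set M : ℝ := h z₀ with hM
      have hsub : C ⊆ Metric.closedBall 0 (M - h p) := by
        intro s hs
        rw [Metric.mem_closedBall, dist_zero_right]
        rcases eq_or_ne s 0 with rfl | hs0
        · have : h p ≤ M := hz₀max (Metric.mem_closedBall_self zero_le_one)
          simp only [norm_zero]
          linarith
        · have hnorm : (0:ℝ) < ‖s‖ := norm_pos_iff.2 hs0
          set u : E := ‖s‖⁻¹ • s with hu
          have huball : p + u ∈ Metric.closedBall p 1 := by
            rw [Metric.mem_closedBall, dist_self_add_left, hu, norm_smul]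
            simp [abs_of_nonneg (inv_nonneg.2 hnorm.le), inv_mul_cancel₀ hnorm.ne']
          have hinner : ⟪s, u⟫ = ‖s‖ := by
            rw [hu, real_inner_smul_right, real_inner_self_eq_norm_sq]
            field_simp
          have h1 := hs u
          rw [hinner] at h1
          have h2 : h (p + u) ≤ M := hz₀max huball
          linarith
      exact (Metric.isBounded_closedBall).subset hsub
    have hCcompact : IsCompact C := Metric.isCompact_of_isClosed_isBounded hCclosed hCbdd
    have hCconv : Convex ℝ C := by
      intro s₁ hs₁ s₂ hs₂ θ σ hθ hσ hsum
      intro u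
      have e1 : θ * h p + σ * h p = h p := by rw [← add_mul, hsum, one_mul]
      have e2 : θ * h (p + u) + σ * h (p + u) = h (p + u) := by rw [← add_mul, hsum, one_mul]
      have b1 := mul_le_mul_of_nonneg_left (hs₁ u) hθ
      have b2 := mul_le_mul_of_nonneg_left (hs₂ u) hσ
      have hexp : ⟪θ • s₁ + σ • s₂, u⟫ = θ * ⟪s₁, u⟫ + σ * ⟪s₂, u⟫ := by
        rw [inner_add_left, real_inner_smul_left, real_inner_smul_left]
      show h p + ⟪θ • s₁ + σ • s₂, u⟫ ≤ h (p + u)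
      rw [hexp]
      nlinarith [b1, b2]
    have hGclosed : IsClosed G := isClosed_coneGen a'
    have hGconv : Convex ℝ G := convex_coneGen a'
    -- separation
    obtain ⟨φ, u, v, hCu, huv, hGv⟩ := geometric_hahn_banach_compact_closed hCconv hCcompact
      hGconv hGclosed (Set.disjoint_iff_inter_eq_empty.2 hdisj)
    set w : E := (InnerProductSpace.toDual ℝ E).symm φ with hw
    have hφ : ∀ z, ⟪w, z⟫ = φ z := fun z => InnerProductSpace.toDual_symm_apply
    have h0G : (0:E) ∈ G := ⟨fun _ => 0, fun _ => le_refl 0, by simp⟩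
    have hv0 : v < 0 := by have := hGv 0 h0G; rwa [map_zero] at this
    -- active constraint directions
    have hKdir : ∀ i, ⟪a i, p⟫ = d i → 0 ≤ ⟪a i, w⟫ := by
      intro i hact
      by_contra hneg
      push_neg at hneg
      have hr : ⟪w, a i⟫ < 0 := by rwa [real_inner_comm]
      set c : ℝ := v / ⟪w, a i⟫ with hcdef
      have hc0 : 0 ≤ c := le_of_lt (div_pos_of_neg_of_neg hv0 hr)
      have hmem : c • a i ∈ G := by
        refine ⟨fun j => if j = i then c else 0, fun j => by dsimp only; split_ifs <;> simp [hc0], ?_⟩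
        rw [ha']
        simp only [ite_smul, zero_smul]
        rw [Finset.sum_ite_eq' Finset.univ i]
        simp [hact]
      have := hGv _ hmem
      rw [map_smul, smul_eq_mul, ← hφ (a i), hcdef, div_mul_cancel₀ _ hr.ne] at this
      exact lt_irrefl v this
    -- feasibility of small moves in direction w
    have hfeasdir : ∀ᶠ t : ℝ in nhdsWithin (0:ℝ) (Ioi (0:ℝ)), ∀ i, d i ≤ ⟪a i, p + t • w⟫ := by
      rw [Filter.eventually_all]
      intro i
      have hexp : ∀ t : ℝ, ⟪a i, p + t • w⟫ = ⟪a i, p⟫ + t * ⟪a i, w⟫ := by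
        intro t; rw [inner_add_right, real_inner_smul_right]
      by_cases hact : ⟪a i, p⟫ = d i
      · have hpos : 0 ≤ ⟪a i, w⟫ := hKdir i hact
        refine eventually_nhdsWithin_of_forall fun t ht => ?_
        rw [hexp, hact]
        rw [Set.mem_Ioi] at ht
        nlinarith
      · have hlt : d i < ⟪a i, p⟫ := lt_of_le_of_ne (hfeas i) (Ne.symm hact)
        have htend : Filter.Tendsto (fun t : ℝ => ⟪a i, p⟫ + t * ⟪a i, w⟫)
            (nhds 0) (nhds (⟪a i, p⟫)) := by
          have : Filter.Tendsto (fun t : ℝ => ⟪a i, p⟫ + t * ⟪a i, w⟫)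
              (nhds 0) (nhds (⟪a i, p⟫ + 0 * ⟪a i, w⟫)) := by
            exact Filter.Tendsto.const_add _ ((continuous_id.mul continuous_const).tendsto 0)
          simpa using this
        have hev : ∀ᶠ t : ℝ in nhdsWithin (0:ℝ) (Ioi (0:ℝ)),
            d i < ⟪a i, p⟫ + t * ⟪a i, w⟫ :=
          (htend.eventually (eventually_gt_nhds hlt)).filter_mono nhdsWithin_le_nhds
        refine hev.mono fun t ht => ?_
        rw [hexp]
        exact ht.le
    have hmono : ∀ᶠ t : ℝ in nhdsWithin (0:ℝ) (Ioi (0:ℝ)), h p ≤ h (p + t • w) :=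
      hfeasdir.mono fun t ht => hmin _ ht
    obtain ⟨s, hsC, hsw⟩ := exists_subgradient_dir hconv p w hmono
    have h1 : φ s < u := hCu s hsC
    have h2 : φ s = ⟪s, w⟫ := by rw [← hφ s, real_inner_comm]
    have h3 : v < 0 := hv0
    linarith [h1, huv, h3, hsw, h2 ▸ h1]
  -- step 2 : extract multipliers
  obtain ⟨s, hsC, l', hl', hsum⟩ := hne
  refine ⟨fun i => if ⟪a i, p⟫ = d i then l' i else 0, ?_, ?_, ?_⟩
  · intro i; dsimp only; split_ifs; exacts [hl' i, le_refl 0]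
  · intro i hi; dsimp only; rw [if_neg hi]
  · have hsum2 : ∑ i, (if ⟪a i, p⟫ = d i then l' i else 0) • a i = s := by
      rw [hsum]
      refine Finset.sum_congr rfl fun i _ => ?_
      rw [ha']
      dsimp only
      split_ifs with hact
      · rfl
      · simp
    intro u
    rw [hsum2]
    exact hsC u

end Kkt
end P5
section P6
open Set Filter

variable {E : Type*} [NormedAddCommGroup E] [InnerProductSpace ℝ E] [FiniteDimensional ℝ E]

namespace Kkt

lemma subgrad_split (f g : E → ℝ) (hfd : Differentiable ℝ f)
    (hgconv : ConvexOn ℝ Set.univ g) (p s : E)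
    (hs : ∀ u, (f p + g p) + ⟪s, u⟫ ≤ f (p + u) + g (p + u)) :
    ∀ u, g p + ⟪s - gradient f p, u⟫ ≤ g (p + u) := by
  intro u
  have hgrad : HasGradientAt f (gradient f p) p := (hfd p).hasGradientAt
  have hf' : HasFDerivAt f (InnerProductSpace.toDual ℝ E (gradient f p)) p :=
    hgrad.hasFDerivAt
  have hcurve : HasDerivAt (fun t : ℝ => p + t • u) u 0 := by
    have h1 : HasDerivAt (fun t : ℝ => t • u) ((1:ℝ) • u) 0 := (hasDerivAt_id (0:ℝ)).smul_const u
    rw [one_smul] at h1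
    exact h1.const_add p
  have hline : HasDerivAt (fun t : ℝ => f (p + t • u)) ⟪gradient f p, u⟫ 0 := by
    have hf'' : HasFDerivAt f (InnerProductSpace.toDual ℝ E (gradient f p))
        ((fun t : ℝ => p + t • u) 0) := by simpa using hf'
    have := hf''.comp_hasDerivAt (0:ℝ) hcurve
    simpa [InnerProductSpace.toDual_apply_apply, Function.comp_def] using this
  have hslope : Filter.Tendsto (fun t : ℝ => (f (p + t • u) - f p) / t)
      (nhdsWithin (0:ℝ) (Ioi (0:ℝ))) (nhds ⟪gradient f p, u⟫) := by
    have h1 := hasDerivAt_iff_tendsto_slope.1 hline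
    have h2 : nhdsWithin (0:ℝ) (Ioi (0:ℝ)) ≤ nhdsWithin (0:ℝ) ({(0:ℝ)}ᶜ) :=
      nhdsWithin_mono 0 (fun t ht => ne_of_gt ht)
    have h3 := h1.mono_left h2
    refine h3.congr fun t => ?_
    simp [slope_def_field]
  have key : ∀ᶠ t : ℝ in nhdsWithin (0:ℝ) (Ioi (0:ℝ)),
      ⟪s, u⟫ - (f (p + t • u) - f p) / t ≤ g (p + u) - g p := by
    have hIoo : ∀ᶠ t : ℝ in nhdsWithin (0:ℝ) (Ioi (0:ℝ)), t ∈ Ioo (0:ℝ) 1 :=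
      Ioo_mem_nhdsGT_of_mem (show (0:ℝ) ∈ Ico (0:ℝ) 1 from ⟨le_refl 0, one_pos⟩)
    refine hIoo.mono fun t ht => ?_
    obtain ⟨ht0, ht1⟩ := ht
    have hcomb : g (p + t • u) ≤ (1 - t) * g p + t * g (p + u) := by
      have hpt : (1 - t) • p + t • (p + u) = p + t • u := by module
      have := hgconv.2 (Set.mem_univ p) (Set.mem_univ (p + u))
        (show (0:ℝ) ≤ 1 - t by linarith) ht0.le (show (1 - t) + t = 1 by ring)
      rw [hpt] at this
      simpa [smul_eq_mul] using this
    have hsub := hs (t • u)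
    rw [real_inner_smul_right] at hsub
    have hdiv : (⟪s, u⟫ - (g (p + u) - g p)) * t ≤ f (p + t • u) - f p := by
      nlinarith [hsub, hcomb]
    rw [sub_le_comm, le_div_iff₀ ht0]
    exact hdiv
  have htends : Filter.Tendsto (fun t : ℝ => ⟪s, u⟫ - (f (p + t • u) - f p) / t)
      (nhdsWithin (0:ℝ) (Ioi (0:ℝ))) (nhds (⟪s, u⟫ - ⟪gradient f p, u⟫)) :=
    tendsto_const_nhds.sub hslope
  have hfinal : ⟪s, u⟫ - ⟪gradient f p, u⟫ ≤ g (p + u) - g p :=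
    le_of_tendsto htends key
  rw [inner_sub_left]
  linarith

end Kkt
end P6
section P7
open Set Filter

namespace Kkt

def rowVec {p q : ℕ} (A : Matrix (Fin p) (Fin q) ℝ) (i : Fin p) : Euc q :=
  WithLp.toLp 2 (fun j => A i j)

lemma inner_eq_sum {n : ℕ} (x y : Euc n) : (inner ℝ x y : ℝ) = ∑ i, x i * y i := by
  rw [PiLp.inner_apply]
  exact Finset.sum_congr rfl fun i _ => by simp [RCLike.inner_apply, mul_comm]

lemma conj_iota_of_nonpos {n : ℕ} (d u : Euc n) (hu : ∀ i, u i ≤ 0) :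
    conjFn (iotaInd d) u = ((inner ℝ u d : ℝ) : EReal) := by
  apply le_antisymm
  · refine iSup_le fun x => ?_
    rw [iotaInd]
    split_ifs with hx
    · have hle : (inner ℝ u x : ℝ) ≤ (inner ℝ u d : ℝ) := by
        rw [inner_eq_sum, inner_eq_sum]
        exact Finset.sum_le_sum fun i _ => mul_le_mul_of_nonpos_left (hx i) (hu i)
      calc ((inner ℝ u x : ℝ) : EReal) - 0 = ((inner ℝ u x : ℝ) : EReal) := by
            rw [sub_zero]
        _ ≤ ((inner ℝ u d : ℝ) : EReal) := EReal.coe_le_coe_iff.2 hle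
    · have : ((inner ℝ u x : ℝ) : EReal) - ⊤ = ⊥ := by
        rw [sub_eq_add_neg, EReal.neg_top, EReal.add_bot]
      rw [this]
      exact bot_le
  · refine le_iSup_of_le d ?_
    rw [iotaInd, if_pos fun i => le_refl (d i), sub_zero]

lemma conj_iota_of_pos {n : ℕ} (d u : Euc n) (hu : ∃ i, 0 < u i) :
    conjFn (iotaInd d) u = ⊤ := by
  obtain ⟨i, hi⟩ := hu
  rw [conjFn, iSup_eq_top]
  intro b hb
  obtain ⟨r, hbr, -⟩ := EReal.exists_between_coe_real hb
  set c : ℝ := max 0 ((r + 1 - (inner ℝ u d : ℝ)) / u i) with hc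
  have hc0 : 0 ≤ c := le_max_left _ _
  set x : Euc n := d + c • EuclideanSpace.single i (1:ℝ) with hx
  have hxd : ∀ j, d j ≤ x j := by
    intro j
    rw [hx]
    have : (d + c • EuclideanSpace.single i (1:ℝ)) j
        = d j + c * (EuclideanSpace.single i (1:ℝ)) j := rfl
    rw [this, EuclideanSpace.single_apply]
    split_ifs with hj
    · simp only [mul_one]; linarith
    · simp
  refine ⟨x, ?_⟩
  rw [iotaInd, if_pos hxd, sub_zero]
  have hinner : (inner ℝ u x : ℝ) = (inner ℝ u d : ℝ) + c * u i := by
    rw [hx, inner_add_right, real_inner_smul_right]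
    congr 1
    rw [show ((1:ℝ) : ℝ) = 1 from rfl]
    have := EuclideanSpace.inner_single_right (𝕜 := ℝ) i (1:ℝ) u
    rw [this]
    simp
  have hge : r < (inner ℝ u x : ℝ) := by
    rw [hinner]
    have h1 : (r + 1 - (inner ℝ u d : ℝ)) / u i ≤ c := le_max_right _ _
    have h2 : r + 1 - (inner ℝ u d : ℝ) ≤ c * u i := by
      rw [← div_le_iff₀ hi] at *
      linarith
    linarith
  exact lt_trans hbr (EReal.coe_lt_coe_iff.2 hge)

lemma mVec_inner {p q : ℕ} (A : Matrix (Fin p) (Fin q) ℝ) (v : Euc q) (i : Fin p) :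
    mVec A v i = (inner ℝ (rowVec A i) v : ℝ) := by
  rw [inner_eq_sum, mVec]
  rfl

lemma mVecT_eq_sum {p q : ℕ} (A : Matrix (Fin p) (Fin q) ℝ) (y : Euc p) :
    mVec A.transpose y = ∑ i, y i • rowVec A i := by
  ext j
  have h1 : mVec A.transpose y j = ∑ i, A i j * y i := by
    rw [mVec, WithLp.ofLp_toLp]
    exact Finset.sum_congr rfl fun i _ => by rw [Matrix.transpose_apply]
  have h2 : (∑ i, y i • rowVec A i) j = ∑ i, y i * A i j := by
    rw [WithLp.ofLp_sum, Finset.sum_apply]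
    rfl
  rw [h1, h2]
  exact Finset.sum_congr rfl fun i _ => mul_comm _ _

end Kkt
end P7
section P8
set_option maxHeartbeats 1000000
open Set Filter

namespace Kkt

def negVec {n : ℕ} (l : Fin n → ℝ) : Euc n := WithLp.toLp 2 (fun i => -l i)

end Kkt

/-- if vsol solves the MPAERL model (minimizes f + g over {v | Dv ≥ d}),
then for every β > 0, η > 0 there is y such that (vsol; y) is a fixed point of T_{β,η}:
vsol = prox_{βg}(vsol − β(∇f(vsol) + Dᵀy)) and y = prox_{η ι_d*}(y + ηDvsol). -/
theorem stmt0 {m₁ m₂ : ℕ} (D : Matrix (Fin m₂) (Fin m₁) ℝ) (d : Euc m₂)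
    (f g : Euc m₁ → ℝ) (L : ℝ)
    (hfdiff : Differentiable ℝ f) (hfconv : ConvexOn ℝ Set.univ f)
    (hflip : ∀ x y : Euc m₁, ‖gradient f x - gradient f y‖ ≤ L * ‖x - y‖)
    (hgconv : ConvexOn ℝ Set.univ g)
    (vsol : Euc m₁)
    (hfeas : ∀ i, d i ≤ mVec D vsol i)
    (hmin : ∀ v : Euc m₁, (∀ i, d i ≤ mVec D v i) → f vsol + g vsol ≤ f v + g v)
    (β η : ℝ) (hβ : 0 < β) (hη : 0 < η) :
    ∃ y : Euc m₂,
      vsol ∈ proxSet (fun u => ((β * g u : ℝ) : EReal))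
            (vsol - β • (gradient f vsol + mVec D.transpose y)) ∧
      y ∈ proxSet (fun u => ((η : ℝ) : EReal) * conjFn (iotaInd d) u)
            (y + η • mVec D vsol) := by
  classical
  set a : Fin m₂ → Euc m₁ := Kkt.rowVec D with ha
  set h : Euc m₁ → ℝ := fun v => f v + g v with hh
  have hconv : ConvexOn ℝ Set.univ h := hfconv.add hgconv
  have hgcont : Continuous g := by
    have := hgconv.continuousOn isOpen_univ
    rwa [continuousOn_univ] at this
  have hcont : Continuous h := (hfdiff.continuous).add hgcont
  have hfeas' : ∀ i, (fun i => d i) i ≤ (inner ℝ (a i) vsol : ℝ) := fun i => by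
    rw [ha, ← Kkt.mVec_inner]
    exact hfeas i
  have hmin' : ∀ v, (∀ i, (fun i => d i) i ≤ (inner ℝ (a i) v : ℝ)) → h vsol ≤ h v := by
    intro v hv
    exact hmin v fun i => by rw [Kkt.mVec_inner]; exact hv i
  obtain ⟨l, hl0, hlsupp, hsub⟩ := Kkt.kkt_main a (fun i => d i) h hconv hcont vsol hfeas' hmin'
  set s : Euc m₁ := ∑ i, l i • a i with hs
  have hgsub : ∀ u, g vsol + (inner ℝ (s - gradient f vsol) u : ℝ) ≤ g (vsol + u) :=
    Kkt.subgrad_split f g hfdiff hgconv vsol s fun u => hsub u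
  set y : Euc m₂ := Kkt.negVec l with hy
  have hyapp : ∀ i, y i = -l i := fun i => rfl
  have hyd : mVec D.transpose y = -s := by
    rw [Kkt.mVecT_eq_sum, hs, ← Finset.sum_neg_distrib]
    exact Finset.sum_congr rfl fun i _ => by
      rw [hyapp i, neg_smul]
  refine ⟨y, ?_, ?_⟩
  · -- first prox condition
    intro u
    set c : Euc m₁ := gradient f vsol + mVec D.transpose y with hcdef
    have hc : c = gradient f vsol - s := by rw [hcdef, hyd, sub_eq_add_neg]
    have e1 : vsol - (vsol - β • c) = β • c := by abel
    have e2 : u - (vsol - β • c) = (u - vsol) + β • c := by abel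
    rw [← EReal.coe_add, ← EReal.coe_add, EReal.coe_le_coe_iff, e1, e2, norm_add_sq_real]
    have hg1 : g vsol + (inner ℝ (s - gradient f vsol) (u - vsol) : ℝ) ≤ g u := by
      have := hgsub (u - vsol)
      rwa [add_sub_cancel] at this
    have hi1 : (inner ℝ (u - vsol) (β • c) : ℝ) = β * (inner ℝ (u - vsol) c : ℝ) :=
      real_inner_smul_right _ _ _
    have hi2 : (inner ℝ (u - vsol) c : ℝ) = -(inner ℝ (s - gradient f vsol) (u - vsol) : ℝ) := by
      rw [hc, ← neg_sub s (gradient f vsol), inner_neg_right, real_inner_comm]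
    have hβg := mul_le_mul_of_nonneg_left hg1 hβ.le
    have hnn : (0:ℝ) ≤ ‖u - vsol‖ ^ 2 := sq_nonneg _
    nlinarith [hβg, hnn, hi1, hi2]
  · -- second prox condition
    intro u
    beta_reduce
    have hydle : ∀ i, y i ≤ 0 := fun i => by rw [hyapp i]; exact neg_nonpos.2 (hl0 i)
    set zv : Euc m₂ := mVec D vsol with hzv
    have hLHS : conjFn (iotaInd d) y = ((inner ℝ y d : ℝ) : EReal) :=
      Kkt.conj_iota_of_nonpos d y hydle
    by_cases hu : ∀ i, u i ≤ 0
    · have hRHS : conjFn (iotaInd d) u = ((inner ℝ u d : ℝ) : EReal) :=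
        Kkt.conj_iota_of_nonpos d u hu
      rw [hLHS, hRHS, ← EReal.coe_mul, ← EReal.coe_mul, ← EReal.coe_add, ← EReal.coe_add,
        EReal.coe_le_coe_iff]
      have e1 : y - (y + η • zv) = -(η • zv) := by abel
      have e2 : u - (y + η • zv) = (u - y) - η • zv := by abel
      rw [e1, e2, norm_neg, norm_sub_sq_real]
      have hi1 : (inner ℝ (u - y) (η • zv) : ℝ) = η * (inner ℝ (u - y) zv : ℝ) :=
        real_inner_smul_right _ _ _
      have hkey : 0 ≤ (inner ℝ (u - y) (d - zv) : ℝ) := by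
        rw [Kkt.inner_eq_sum]
        refine Finset.sum_nonneg fun i _ => ?_
        have hui : (u - y) i = u i - y i := rfl
        have hdi : (d - zv) i = d i - zv i := rfl
        rw [hui, hdi]
        by_cases hli : l i = 0
        · rw [hyapp i, hli]
          rw [neg_zero, sub_zero]
          have h2 : d i - zv i ≤ 0 := by linarith [hfeas i]
          nlinarith [hu i, h2]
        · have hact : (inner ℝ (a i) vsol : ℝ) = d i := by
            by_contra hne
            exact hli (hlsupp i hne)
          have h1 : zv i = d i := by
            rw [hzv, Kkt.mVec_inner, ← ha]
            exact hact
          rw [h1, sub_self, mul_zero]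
      have hkey2 : (inner ℝ (u - y) (d - zv) : ℝ)
          = (inner ℝ u d : ℝ) - (inner ℝ y d : ℝ) - (inner ℝ (u - y) zv : ℝ) := by
        rw [inner_sub_right, inner_sub_left]
      have hnn : (0:ℝ) ≤ ‖u - y‖ ^ 2 := sq_nonneg _
      nlinarith [mul_nonneg hη.le hkey, hkey2, hnn, hi1]
    · push_neg at hu
      have hRHS : conjFn (iotaInd d) u = ⊤ := Kkt.conj_iota_of_pos d u ⟨hu.choose, hu.choose_spec⟩
      rw [hRHS, EReal.coe_mul_top_of_pos hη, EReal.coe_add_top]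
      exact le_top

end P8
end
end

section
/- Suppose there exist β > 0 and η > 0 such that z = (v; y) ∈ ℝ^{m₁+m₂} is a fixed point of T_{β,η}, i.e. v = prox_{βg}(v − β(∇f(v) + Dᵀy)) and y = prox_{η ι_d*}(y + ηDv). Then v is a solution of the MPAERL model, i.e. v minimizes f(u) + g(u) over {u ∈ ℝ^{m₁} : Du ≥ d componentwise}. -/
noncomputable section

open scoped BigOperators

/- ### Auxiliary lemmas -/

/-- If `c·t ≤ K·t²` for all small positive `t`, then `c ≤ 0`. -/
lemma aux_le (c K : ℝ) (h : ∀ t : ℝ, 0 < t → t ≤ 1 → c * t ≤ K * t ^ 2) : c ≤ 0 := by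
  by_contra hc
  push_neg at hc
  have hK1 : (0:ℝ) < max K 1 := lt_of_lt_of_le one_pos (le_max_right K 1)
  set t := min 1 (c / (2 * max K 1)) with ht
  have ht0 : 0 < t := lt_min one_pos (div_pos hc (by positivity))
  have h1 := h t ht0 (min_le_left _ _)
  have h2 : K * t ^ 2 ≤ max K 1 * t ^ 2 :=
    mul_le_mul_of_nonneg_right (le_max_left K 1) (sq_nonneg t)
  have h3 : t ≤ c / (2 * max K 1) := min_le_right _ _
  have h4 : max K 1 * t ≤ c / 2 := by
    calc max K 1 * t ≤ max K 1 * (c / (2 * max K 1)) :=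
          mul_le_mul_of_nonneg_left h3 hK1.le
      _ = c / 2 := by field_simp
  nlinarith

/-- Gradient inequality for a differentiable convex function. -/
lemma grad_ineq {n : ℕ} {f : Euc n → ℝ} (hd : Differentiable ℝ f)
    (hc : ConvexOn ℝ Set.univ f) (v u : Euc n) :
    (inner ℝ (gradient f v) (u - v) : ℝ) ≤ f u - f v := by
  set w : Euc n := u - v with hw
  have hg : HasGradientAt f (gradient f v) v := (hd v).hasGradientAt
  have hline : HasDerivAt (fun t : ℝ => v + t • w) w 0 := by
    simpa using ((hasDerivAt_id (0:ℝ)).smul_const w).const_add v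
  have hφ : HasDerivAt (fun t : ℝ => f (v + t • w)) (inner ℝ (gradient f v) w : ℝ) 0 := by
    have h0 : HasFDerivAt f ((InnerProductSpace.toDual ℝ (Euc n)) (gradient f v))
        (v + (0:ℝ) • w) := by
      simpa using hg.hasFDerivAt
    have := h0.comp_hasDerivAt 0 hline
    simp only [InnerProductSpace.toDual_apply_apply] at this
    exact this
  have hslope : ∀ t : ℝ, 0 < t → t ≤ 1 →
      slope (fun t : ℝ => f (v + t • w)) 0 t ≤ f u - f v := by
    intro t ht0 ht1
    have hconv := hc.2 (Set.mem_univ v) (Set.mem_univ u) (by linarith : (0:ℝ) ≤ 1 - t)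
      ht0.le (by ring)
    have heq : (1 - t) • v + t • u = v + t • w := by rw [hw]; module
    rw [heq] at hconv
    rw [slope_def_field]
    simp only [sub_zero]
    rw [div_le_iff₀ ht0]
    have h0' : f (v + (0:ℝ) • w) = f v := by norm_num
    rw [h0']
    have : f (v + t • w) ≤ (1 - t) * f v + t * f u := by
      simpa [smul_eq_mul] using hconv
    nlinarith
  have htend : Filter.Tendsto (slope (fun t : ℝ => f (v + t • w)) 0)
      (nhdsWithin 0 (Set.Ioi 0)) (nhds (inner ℝ (gradient f v) w : ℝ)) := by
    have h := hasDerivAt_iff_tendsto_slope.mp hφ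
    exact h.mono_left (nhdsWithin_mono _ (fun t ht => ne_of_gt ht))
  refine le_of_tendsto htend ?_
  filter_upwards [Ioc_mem_nhdsGT_of_mem (Set.left_mem_Ico.2 one_pos)] with t ht
  exact hslope t ht.1 ht.2

/-- `⟨Aᵀ y, u⟩ = ⟨y, A u⟩`. -/
lemma adjoint_eq {p q : ℕ} (A : Matrix (Fin p) (Fin q) ℝ) (y : Euc p) (u : Euc q) :
    (inner ℝ (mVec A.transpose y) u : ℝ) = (inner ℝ y (mVec A u) : ℝ) := by
  simp only [PiLp.inner_apply, RCLike.inner_apply, conj_trivial, mVec, Matrix.transpose_apply,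
    Finset.sum_mul, Finset.mul_sum]
  rw [Finset.sum_comm]
  congr 1; ext i; congr 1; ext j; ring

lemma inner_ge_of_le {n : ℕ} {u x d : Euc n} (hu : ∀ i, u i ≤ 0) (hx : ∀ i, d i ≤ x i) :
    (inner ℝ u x : ℝ) ≤ (inner ℝ u d : ℝ) := by
  simp only [PiLp.inner_apply, RCLike.inner_apply, conj_trivial]
  apply Finset.sum_le_sum
  intro i _
  exact mul_le_mul_of_nonpos_right (hx i) (hu i)

/-- Computation of the conjugate of the indicator function. -/
lemma conj_eval {n : ℕ} (d u : Euc n) :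
    conjFn (iotaInd d) u =
      if ∀ i, u i ≤ 0 then (((inner ℝ u d : ℝ)) : EReal) else ⊤ := by
  unfold conjFn
  split_ifs with hu
  · apply le_antisymm
    · apply iSup_le
      intro x
      unfold iotaInd
      split_ifs with hx
      · rw [sub_zero]
        exact_mod_cast inner_ge_of_le hu hx
      · rw [EReal.sub_top]; exact bot_le
    · have := le_iSup (fun x : Euc n => (((inner ℝ u x : ℝ) : EReal) - iotaInd d x)) d
      simpa [iotaInd] using this
  · rw [iSup_eq_top]
    intro b hb
    push_neg at hu
    obtain ⟨i, hi⟩ := hu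
    obtain ⟨r, hbr, -⟩ := EReal.lt_iff_exists_real_btwn.mp hb
    set s : ℝ := max 0 ((r + 1 - (inner ℝ u d : ℝ)) / u i) with hs
    have hs0 : 0 ≤ s := le_max_left _ _
    refine ⟨d + s • EuclideanSpace.single i 1, ?_⟩
    have hfeas : ∀ j, d j ≤ (d + s • EuclideanSpace.single i (1:ℝ) : Euc n) j := by
      intro j
      show d j ≤ (d + s • EuclideanSpace.single i 1 : Euc n) j
      have : (0:ℝ) ≤ s * (EuclideanSpace.single i (1:ℝ)) j := by
        apply mul_nonneg hs0
        rw [EuclideanSpace.single_apply]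
        split_ifs <;> norm_num
      simp only [PiLp.add_apply, PiLp.smul_apply, smul_eq_mul]
      linarith
    have hval : (inner ℝ u (d + s • EuclideanSpace.single i 1) : ℝ)
        = (inner ℝ u d : ℝ) + s * u i := by
      rw [inner_add_right, real_inner_smul_right, EuclideanSpace.inner_single_right]
      simp [mul_comm]
    have hbig : r < (inner ℝ u d : ℝ) + s * u i := by
      have h1 : (r + 1 - (inner ℝ u d : ℝ)) / u i ≤ s := le_max_right _ _
      have := (div_le_iff₀ hi).mp h1
      nlinarith
    rw [iotaInd, if_pos hfeas, sub_zero, hval]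
    exact lt_trans hbr (by exact_mod_cast hbig)

lemma mVec_sub {p q : ℕ} (A : Matrix (Fin p) (Fin q) ℝ) (u v : Euc q) :
    mVec A (u - v) = mVec A u - mVec A v := by
  ext i
  simp only [mVec, PiLp.sub_apply, mul_sub, Finset.sum_sub_distrib]

/-- if there exist β > 0, η > 0 such that z = (v; y) is a fixed point of
T_{β,η}, i.e. v = prox_{βg}(v − β(∇f(v) + Dᵀy)) and y = prox_{η ι_d*}(y + ηDv),
then v solves the MPAERL model: v minimizes f + g over {u | Du ≥ d}. -/
theorem stmt1 {m₁ m₂ : ℕ} (D : Matrix (Fin m₂) (Fin m₁) ℝ) (d : Euc m₂)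
    (f g : Euc m₁ → ℝ) (L : ℝ)
    (hfdiff : Differentiable ℝ f) (hfconv : ConvexOn ℝ Set.univ f)
    (hflip : ∀ x y : Euc m₁, ‖gradient f x - gradient f y‖ ≤ L * ‖x - y‖)
    (hgconv : ConvexOn ℝ Set.univ g)
    (v : Euc m₁) (y : Euc m₂) (β η : ℝ) (hβ : 0 < β) (hη : 0 < η)
    (hfix1 : v ∈ proxSet (fun u => ((β * g u : ℝ) : EReal))
               (v - β • (gradient f v + mVec D.transpose y)))
    (hfix2 : y ∈ proxSet (fun u => ((η : ℝ) : EReal) * conjFn (iotaInd d) u)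
               (y + η • mVec D v)) :
    (∀ i, d i ≤ mVec D v i) ∧
      ∀ u : Euc m₁, (∀ i, d i ≤ mVec D u i) → f v + g v ≤ f u + g u := by
  set w : Euc m₁ := gradient f v + mVec D.transpose y with hw
  -- Step A : subgradient-type inequality for g at v
  have hA : ∀ u : Euc m₁, g v - g u ≤ (inner ℝ w (u - v) : ℝ) := by
    intro u
    have hr : ∀ u' : Euc m₁,
        1/2 * ‖v - (v - β • w)‖^2 + β * g v ≤ 1/2 * ‖u' - (v - β • w)‖^2 + β * g u' := by
      intro u'
      have h := hfix1 u'
      rw [← EReal.coe_add, ← EReal.coe_add, EReal.coe_le_coe_iff] at h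
      exact h
    have hc : β * (g v - g u - (inner ℝ (u - v) w : ℝ)) ≤ 0 := by
      apply aux_le _ (1/2 * ‖u - v‖^2)
      intro t ht0 ht1
      have h := hr (v + t • (u - v))
      have e1 : v - (v - β • w) = β • w := by abel
      have e2 : v + t • (u - v) - (v - β • w) = t • (u - v) + β • w := by abel
      rw [e1, e2, norm_add_sq_real] at h
      have e3 : ‖t • (u - v)‖^2 = t^2 * ‖u - v‖^2 := by
        rw [norm_smul]; simp [mul_pow, sq_abs]
      have e4 : (inner ℝ (t • (u - v)) (β • w) : ℝ) = t * β * (inner ℝ (u - v) w : ℝ) := by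
        rw [real_inner_smul_left, real_inner_smul_right]; ring
      rw [e3, e4] at h
      have hconv : g (v + t • (u - v)) ≤ (1 - t) * g v + t * g u := by
        have hc2 := hgconv.2 (Set.mem_univ v) (Set.mem_univ u)
          (by linarith : (0:ℝ) ≤ 1 - t) ht0.le (by ring)
        have heq : (1 - t) • v + t • u = v + t • (u - v) := by module
        rw [heq] at hc2
        simpa [smul_eq_mul] using hc2
      nlinarith
    have hcc : g v - g u - (inner ℝ (u - v) w : ℝ) ≤ 0 := by nlinarith
    rw [real_inner_comm]
    linarith
  -- Step B : y is componentwise nonpositive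
  have hy : ∀ i, y i ≤ 0 := by
    by_contra hcon
    have h0 := hfix2 0
    beta_reduce at h0
    have h00 : ∀ i : Fin m₂, (0 : Euc m₂) i ≤ 0 := fun i => le_rfl
    rw [conj_eval, conj_eval, if_neg hcon, if_pos h00] at h0
    rw [EReal.coe_mul_top_of_pos (by exact_mod_cast hη), EReal.coe_add_top] at h0
    have hz : (inner ℝ (0:Euc m₂) d : ℝ) = 0 := inner_zero_left d
    rw [hz, ← EReal.coe_mul, ← EReal.coe_add] at h0
    exact (EReal.coe_ne_top _ (top_le_iff.mp h0))
  -- The key real-valued inequality coming from `hfix2`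
  have hP : ∀ u : Euc m₂, (∀ i, u i ≤ 0) →
      η * ((inner ℝ (u - y) (mVec D v) : ℝ) - (inner ℝ (u - y) d : ℝ)) ≤ 1/2 * ‖u - y‖^2 := by
    intro u hu
    have h := hfix2 u
    beta_reduce at h
    rw [conj_eval, conj_eval, if_pos hy, if_pos hu, ← EReal.coe_mul, ← EReal.coe_mul,
      ← EReal.coe_add, ← EReal.coe_add, EReal.coe_le_coe_iff] at h
    have e1 : y - (y + η • mVec D v) = -(η • mVec D v) := by abel
    have e2 : u - (y + η • mVec D v) = (u - y) - η • mVec D v := by abel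
    rw [e1, e2, norm_neg, norm_sub_sq_real] at h
    have e4 : (inner ℝ (u - y) (η • mVec D v) : ℝ) = η * inner ℝ (u - y) (mVec D v) :=
      real_inner_smul_right _ _ _
    rw [e4] at h
    have e5 : (inner ℝ (u - y) d : ℝ) = inner ℝ u d - inner ℝ y d := inner_sub_left u y d
    nlinarith [e5]
  -- Feasibility of v
  have hfeas : ∀ i, d i ≤ mVec D v i := by
    intro i
    have hc : η * (d i - mVec D v i) ≤ 0 := by
      apply aux_le _ (1/2)
      intro t ht0 ht1
      have hu : ∀ j, (y - t • EuclideanSpace.single i (1:ℝ) : Euc m₂) j ≤ 0 := by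
        intro j
        show y j - t * (EuclideanSpace.single i (1:ℝ)) j ≤ 0
        rw [EuclideanSpace.single_apply]
        have := hy j
        split_ifs <;> nlinarith
      have h := hP _ hu
      have e : (y - t • EuclideanSpace.single i (1:ℝ)) - y
          = -(t • EuclideanSpace.single i (1:ℝ)) := by abel
      rw [e] at h
      have e1 : ∀ x : Euc m₂,
          (inner ℝ (-(t • EuclideanSpace.single i (1:ℝ))) x : ℝ) = -(t * x i) := by
        intro x
        rw [inner_neg_left, real_inner_smul_left, EuclideanSpace.inner_single_left]
        simp
      rw [e1, e1, norm_neg, norm_smul, EuclideanSpace.norm_single] at h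
      simp only [norm_one, mul_one, Real.norm_eq_abs] at h
      nlinarith [sq_abs t]
    nlinarith
  -- complementary slackness: ⟨y, Dv⟩ = ⟨y, d⟩
  have hyd : (inner ℝ y (mVec D v) : ℝ) = inner ℝ y d := by
    have hin1 : ∀ (σ : ℝ), σ = 1 ∨ σ = -1 →
        σ * ((inner ℝ y (mVec D v) : ℝ) - inner ℝ y d) ≤ 0 := by
      intro σ hσ
      have hησ : η * (σ * ((inner ℝ y (mVec D v) : ℝ) - inner ℝ y d)) ≤ 0 := by
        apply aux_le _ (1/2 * ‖y‖^2)
        intro t ht0 ht1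
        have hu : ∀ j, (y + (t * σ) • y : Euc m₂) j ≤ 0 := by
          intro j
          show y j + (t * σ) * y j ≤ 0
          have := hy j
          rcases hσ with h | h <;> rw [h] <;> nlinarith
        have h := hP _ hu
        have e : (y + (t * σ) • y) - y = (t * σ) • y := by abel
        rw [e] at h
        rw [real_inner_smul_left, real_inner_smul_left, norm_smul, Real.norm_eq_abs] at h
        have habs : |t * σ| = t := by
          rcases hσ with h' | h' <;> rw [h'] <;>
            simp [abs_of_pos ht0, abs_of_nonneg ht0.le]
        rw [habs] at h
        nlinarith
      nlinarith
    have h1 := hin1 1 (Or.inl rfl)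
    have h2 := hin1 (-1) (Or.inr rfl)
    nlinarith
  refine ⟨hfeas, ?_⟩
  intro u hu
  have h1 := grad_ineq hfdiff hfconv v u
  have h2 := hA u
  have h3 : (inner ℝ w (u - v) : ℝ) = inner ℝ (gradient f v) (u - v)
      + ((inner ℝ y (mVec D u) : ℝ) - inner ℝ y (mVec D v)) := by
    rw [hw, inner_add_left, adjoint_eq, mVec_sub]
    simp only [inner_sub_right]
  have h4 : (inner ℝ y (mVec D u) : ℝ) ≤ inner ℝ y d := inner_ge_of_le hy hu
  rw [h3, hyd] at h2
  linarith
end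
end

section
/- Let L > 0 and ξ > 0. If β ∈ (0, 2ξ/L) and η ∈ (0, 2ξ(2ξ − βL)/(4βξ²‖D‖₂² + L(2ξ − βL))), then the minimum eigenvalue of W = [[(1/β)I_{m₁}, −Dᵀ],[−D, (1/η)I_{m₂}]] satisfies λ_min(W) > L/(2ξ); equivalently, W − (L/(2ξ))I_{m₁+m₂} is positive definite. -/
noncomputable section

open scoped BigOperators

/-- The block operator `W = P⁻¹G = [[(1/β)I, −Dᵀ],[−D, (1/η)I]]` on `ℝ^{m₁} × ℝ^{m₂}`. -/
def Wapp {m₁ m₂ : ℕ} (β η : ℝ) (D : Matrix (Fin m₂) (Fin m₁) ℝ)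
    (z : Euc m₁ × Euc m₂) : Euc m₁ × Euc m₂ :=
  ((1 / β) • z.1 - mVec D.transpose z.2, -(mVec D z.1) + (1 / η) • z.2)

/-- The bilinear form `⟨z, Ww⟩` associated with `W`. -/
def ipW {m₁ m₂ : ℕ} (β η : ℝ) (D : Matrix (Fin m₂) (Fin m₁) ℝ)
    (z w : Euc m₁ × Euc m₂) : ℝ :=
  (inner ℝ z.1 (Wapp β η D w).1 : ℝ) + (inner ℝ z.2 (Wapp β η D w).2 : ℝ)

/-- The `W`-weighted norm `‖z‖_W = ⟨z, Wz⟩^{1/2}`. -/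
def normW {m₁ m₂ : ℕ} (β η : ℝ) (D : Matrix (Fin m₂) (Fin m₁) ℝ)
    (z : Euc m₁ × Euc m₂) : ℝ :=
  Real.sqrt (ipW β η D z z)


/-- The spectral norm (ℓ²-operator norm) of a matrix. -/
def specNorm {p q : ℕ} (A : Matrix (Fin p) (Fin q) ℝ) : ℝ :=
  ‖LinearMap.toContinuousLinearMap (Matrix.toEuclideanLin A)‖


lemma mVec_eq {p q : ℕ} (A : Matrix (Fin p) (Fin q) ℝ) (v : Euc q) :
    mVec A v = Matrix.toEuclideanLin A v := by
  ext i
  simp [mVec, Matrix.toEuclideanLin_apply, Matrix.mulVec, dotProduct]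

lemma mVec_norm_le {p q : ℕ} (A : Matrix (Fin p) (Fin q) ℝ) (v : Euc q) :
    ‖mVec A v‖ ≤ specNorm A * ‖v‖ := by
  rw [mVec_eq]
  exact (LinearMap.toContinuousLinearMap (Matrix.toEuclideanLin A)).le_opNorm v

lemma inner_mVec_transpose {p q : ℕ} (A : Matrix (Fin p) (Fin q) ℝ) (x : Euc q) (y : Euc p) :
    (inner ℝ x (mVec A.transpose y) : ℝ) = (inner ℝ (mVec A x) y : ℝ) := by
  simp only [mVec, PiLp.inner_apply, PiLp.toLp_apply, RCLike.inner_apply, conj_trivial, Matrix.transpose_apply,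
    Finset.mul_sum, Finset.sum_mul]
  rw [Finset.sum_comm]
  exact Finset.sum_congr rfl fun i _ => Finset.sum_congr rfl fun j _ => by ring

lemma ipW_self {m₁ m₂ : ℕ} (β η : ℝ) (D : Matrix (Fin m₂) (Fin m₁) ℝ)
    (z : Euc m₁ × Euc m₂) :
    ipW β η D z z = (1 / β) * ‖z.1‖ ^ 2 + (1 / η) * ‖z.2‖ ^ 2
      - 2 * (inner ℝ (mVec D z.1) z.2 : ℝ) := by
  simp only [ipW, Wapp, inner_sub_right, inner_add_right, inner_neg_right,
    real_inner_smul_right, real_inner_self_eq_norm_sq, inner_mVec_transpose,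
    real_inner_comm z.2 (mVec D z.1)]
  ring

lemma key_ineq (A B N a b : ℝ) (hA : 0 < A) (hB : 0 < B)
    (hAB : N ^ 2 < A * B) (ha : 0 ≤ a) (hb : 0 ≤ b) (hz : 0 < a ^ 2 + b ^ 2) :
    2 * N * a * b < A * a ^ 2 + B * b ^ 2 := by
  rcases eq_or_lt_of_le ha with h | h
  · obtain rfl := h.symm
    have hb2 : 0 < b ^ 2 := by nlinarith
    nlinarith [mul_pos hB hb2]
  rcases eq_or_lt_of_le hb with h' | h'
  · obtain rfl := h'.symm
    nlinarith [mul_pos hA (pow_pos h 2)]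
  have := mul_pos (sub_pos.2 hAB) (pow_pos h 2)
  nlinarith [sq_nonneg (N * a - B * b), this, hB.le]

/-- if β ∈ (0, 2ξ/L) and
η ∈ (0, 2ξ(2ξ − βL)/(4βξ²‖D‖₂² + L(2ξ − βL))), then λ_min(W) > L/(2ξ);
equivalently, W − (L/(2ξ))I is positive definite, i.e.
⟨z, Wz⟩ > (L/(2ξ))‖z‖² for all z ≠ 0. -/
theorem stmt5 {m₁ m₂ : ℕ} (D : Matrix (Fin m₂) (Fin m₁) ℝ)
    (L ξ : ℝ) (hL : 0 < L) (hξ : 0 < ξ)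
    (β η : ℝ)
    (hβ : β ∈ Set.Ioo 0 (2 * ξ / L))
    (hη : η ∈ Set.Ioo 0
      (2 * ξ * (2 * ξ - β * L) / (4 * β * ξ ^ 2 * specNorm D ^ 2 + L * (2 * ξ - β * L)))) :
    (∀ lammin : ℝ,
      IsLeast {μ : ℝ | ∃ z : Euc m₁ × Euc m₂, z ≠ 0 ∧ Wapp β η D z = μ • z} lammin →
      L / (2 * ξ) < lammin) ∧
    (∀ z : Euc m₁ × Euc m₂, z ≠ 0 →
      L / (2 * ξ) * (‖z.1‖ ^ 2 + ‖z.2‖ ^ 2) < ipW β η D z z) := by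
  obtain ⟨hβ0, hβ2⟩ := hβ
  obtain ⟨hη0, hη2⟩ := hη
  set N := specNorm D with hNdef
  have hN : 0 ≤ N := norm_nonneg _
  have hβL : β * L < 2 * ξ := (lt_div_iff₀ hL).mp hβ2
  have hS : 0 < 4 * β * ξ ^ 2 * N ^ 2 + L * (2 * ξ - β * L) := by
    have : 0 ≤ 4 * β * ξ ^ 2 * N ^ 2 := by positivity
    nlinarith
  have hηS : η * (4 * β * ξ ^ 2 * N ^ 2 + L * (2 * ξ - β * L)) < 2 * ξ * (2 * ξ - β * L) :=
    (lt_div_iff₀ hS).mp hη2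
  have h2ξβL : 0 < 2 * ξ - β * L := by linarith
  have hηL : η * L < 2 * ξ := by
    nlinarith [mul_nonneg hη0.le (show (0:ℝ) ≤ 4 * β * ξ ^ 2 * N ^ 2 by positivity)]
  set c : ℝ := L / (2 * ξ) with hc
  have hA : 0 < 1 / β - c := by
    rw [hc, sub_pos, div_lt_div_iff₀ (by positivity) hβ0]
    nlinarith
  have hB : 0 < 1 / η - c := by
    rw [hc, sub_pos, div_lt_div_iff₀ (by positivity) hη0]
    nlinarith
  have e1 : 1 / β - c = (2 * ξ - β * L) / (2 * β * ξ) := by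
    rw [hc, div_sub_div _ _ hβ0.ne' (by positivity : (2 * ξ : ℝ) ≠ 0)]
    congr 1 <;> ring
  have e2 : 1 / η - c = (2 * ξ - η * L) / (2 * η * ξ) := by
    rw [hc, div_sub_div _ _ hη0.ne' (by positivity : (2 * ξ : ℝ) ≠ 0)]
    congr 1 <;> ring
  have hAB : N ^ 2 < (1 / β - c) * (1 / η - c) := by
    rw [e1, e2, div_mul_div_comm, lt_div_iff₀ (by positivity)]
    nlinarith
  -- main quadratic-form bound
  have main : ∀ z : Euc m₁ × Euc m₂, z ≠ 0 →
      c * (‖z.1‖ ^ 2 + ‖z.2‖ ^ 2) < ipW β η D z z := by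
    intro z hz
    have hz12 : z.1 ≠ 0 ∨ z.2 ≠ 0 := by
      by_contra h
      push_neg at h
      exact hz (Prod.ext h.1 h.2)
    have hz2 : 0 < ‖z.1‖ ^ 2 + ‖z.2‖ ^ 2 := by
      rcases hz12 with h | h
      · exact add_pos_of_pos_of_nonneg (pow_pos (norm_pos_iff.mpr h) 2) (sq_nonneg _)
      · exact add_pos_of_nonneg_of_pos (sq_nonneg _) (pow_pos (norm_pos_iff.mpr h) 2)
    rw [ipW_self]
    have hinner : (inner ℝ (mVec D z.1) z.2 : ℝ) ≤ N * ‖z.1‖ * ‖z.2‖ := by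
      calc (inner ℝ (mVec D z.1) z.2 : ℝ) ≤ ‖mVec D z.1‖ * ‖z.2‖ := real_inner_le_norm _ _
        _ ≤ N * ‖z.1‖ * ‖z.2‖ := by
            have := mVec_norm_le D z.1
            nlinarith [norm_nonneg z.2]
    have := key_ineq (1 / β - c) (1 / η - c) N ‖z.1‖ ‖z.2‖ hA hB hAB
      (norm_nonneg _) (norm_nonneg _) hz2
    linarith
  refine ⟨?_, main⟩
  rintro lammin ⟨⟨z, hz, hWz⟩, -⟩
  have h1 : (Wapp β η D z).1 = lammin • z.1 := by rw [hWz, Prod.smul_fst]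
  have h2 : (Wapp β η D z).2 = lammin • z.2 := by rw [hWz, Prod.smul_snd]
  have hip : ipW β η D z z = lammin * (‖z.1‖ ^ 2 + ‖z.2‖ ^ 2) := by
    simp only [ipW, h1, h2, real_inner_smul_right, real_inner_self_eq_norm_sq]
    ring
  have hz2 : 0 < ‖z.1‖ ^ 2 + ‖z.2‖ ^ 2 := by
    have hz12 : z.1 ≠ 0 ∨ z.2 ≠ 0 := by
      by_contra h
      push_neg at h
      exact hz (Prod.ext h.1 h.2)
    rcases hz12 with h | h
    · exact add_pos_of_pos_of_nonneg (pow_pos (norm_pos_iff.mpr h) 2) (sq_nonneg _)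
    · exact add_pos_of_nonneg_of_pos (sq_nonneg _) (pow_pos (norm_pos_iff.mpr h) 2)
  have hm := main z hz
  rw [hip] at hm
  exact lt_of_mul_lt_mul_right hm hz2.le
end
end

section
/- Let r : ℝ^{m₁+m₂} → ℝ be convex and differentiable with L-Lipschitz gradient (e.g. r(v; y) = f(v) with ∇f L-Lipschitz), and assume λ_min(W) > L/2. Set α := L/(2λ_min(W)) ∈ (0,1). Then the operator Ñ := I − (1/α)W⁻¹∇r is nonexpansive with respect to W, and consequently I − W⁻¹∇r = (1−α)I + αÑ is α-averaged nonexpansive with respect to W. -/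
noncomputable section

open scoped BigOperators

/-- `ℝ^{m₁+m₂}`, realized as the Euclidean space indexed by `Fin m₁ ⊕ Fin m₂`. -/
abbrev EucS (m₁ m₂ : ℕ) := EuclideanSpace ℝ (Fin m₁ ⊕ Fin m₂)

/-- First block (first m₁ components) of a vector in `ℝ^{m₁+m₂}`. -/
def fstS {m₁ m₂ : ℕ} (z : EucS m₁ m₂) : Euc m₁ := WithLp.toLp 2 (fun i => z (Sum.inl i))

/-- Second block (last m₂ components) of a vector in `ℝ^{m₁+m₂}`. -/
def sndS {m₁ m₂ : ℕ} (z : EucS m₁ m₂) : Euc m₂ := WithLp.toLp 2 (fun j => z (Sum.inr j))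

/-- Assemble a vector of `ℝ^{m₁+m₂}` from its two blocks. -/
def pairS {m₁ m₂ : ℕ} (a : Euc m₁) (b : Euc m₂) : EucS m₁ m₂ := WithLp.toLp 2 (Sum.elim a b)

/-- The block matrix `W = [[(1/β)I, −Dᵀ],[−D, (1/η)I]]` acting on `ℝ^{m₁+m₂}`. -/
def WappS {m₁ m₂ : ℕ} (β η : ℝ) (D : Matrix (Fin m₂) (Fin m₁) ℝ)
    (z : EucS m₁ m₂) : EucS m₁ m₂ :=
  pairS ((1 / β) • fstS z - mVec D.transpose (sndS z))
    (-(mVec D (fstS z)) + (1 / η) • sndS z)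

/-- The `W`-weighted norm `‖z‖_W = ⟨z, Wz⟩^{1/2}` on `ℝ^{m₁+m₂}`. -/
def normWS {m₁ m₂ : ℕ} (β η : ℝ) (D : Matrix (Fin m₂) (Fin m₁) ℝ)
    (z : EucS m₁ m₂) : ℝ :=
  Real.sqrt (inner ℝ z (WappS β η D z) : ℝ)

section Aux
variable {m₁ m₂ : ℕ} (β η : ℝ) (D : Matrix (Fin m₂) (Fin m₁) ℝ)

lemma WappS_inl (z : EucS m₁ m₂) (i : Fin m₁) :
    WappS β η D z (Sum.inl i) = (1/β) * z (Sum.inl i) - ∑ j, D j i * z (Sum.inr j) := by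
  simp [WappS, pairS, fstS, sndS, mVec, Matrix.transpose_apply, PiLp.sub_apply, PiLp.smul_apply,
    smul_eq_mul]

lemma WappS_inr (z : EucS m₁ m₂) (j : Fin m₂) :
    WappS β η D z (Sum.inr j) = -(∑ i, D j i * z (Sum.inl i)) + (1/η) * z (Sum.inr j) := by
  simp [WappS, pairS, fstS, sndS, mVec, PiLp.add_apply, PiLp.neg_apply, PiLp.smul_apply,
    smul_eq_mul]

lemma inner_Wapp (z w : EucS m₁ m₂) : (inner ℝ z (WappS β η D w) : ℝ) =
    ((∑ i, β⁻¹ * (z (Sum.inl i) * w (Sum.inl i))) + ∑ j, η⁻¹ * (z (Sum.inr j) * w (Sum.inr j)))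
    - ∑ j, ∑ i, D j i * (z (Sum.inl i) * w (Sum.inr j) + z (Sum.inr j) * w (Sum.inl i)) := by
  simp only [PiLp.inner_apply, RCLike.inner_apply, conj_trivial, Fintype.sum_sum_type,
    WappS_inl, WappS_inr]
  simp only [mul_sub, mul_add, mul_neg, Finset.mul_sum, Finset.sum_sub_distrib,
    Finset.sum_add_distrib, Finset.sum_neg_distrib, sub_mul, add_mul, neg_mul, Finset.sum_mul]
  rw [Finset.sum_comm (f := fun i j => D j i * w (Sum.inr j) * z (Sum.inl i))]
  ring_nf
  simp only [mul_comm, mul_left_comm, mul_assoc]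
  ring

lemma Wsym (z w : EucS m₁ m₂) :
    (inner ℝ (WappS β η D z) w : ℝ) = inner ℝ z (WappS β η D w) := by
  rw [real_inner_comm, inner_Wapp, inner_Wapp]
  simp only [mul_comm, mul_left_comm, mul_assoc, add_comm, add_left_comm]

def Wlin : EucS m₁ m₂ →ₗ[ℝ] EucS m₁ m₂ where
  toFun := WappS β η D
  map_add' z w := by
    ext k
    cases k with
    | inl i =>
      simp only [WappS_inl, PiLp.add_apply, mul_add, Finset.sum_add_distrib]
      ring
    | inr j =>
      simp only [WappS_inr, PiLp.add_apply, mul_add, Finset.sum_add_distrib]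
      ring
  map_smul' c z := by
    ext k
    cases k with
    | inl i =>
      simp only [WappS_inl, PiLp.smul_apply, smul_eq_mul, RingHom.id_apply, mul_sub,
        Finset.mul_sum]
      simp only [mul_comm, mul_left_comm, mul_assoc]
    | inr j =>
      simp only [WappS_inr, PiLp.smul_apply, smul_eq_mul, RingHom.id_apply, mul_add, mul_neg,
        Finset.mul_sum]
      simp only [mul_comm, mul_left_comm, mul_assoc]

lemma quad_lb (lam : ℝ)
    (hlb : ∀ μ : ℝ, (∃ z : EucS m₁ m₂, z ≠ 0 ∧ WappS β η D z = μ • z) → lam ≤ μ)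
    (z : EucS m₁ m₂) : lam * ‖z‖ ^ 2 ≤ (inner ℝ z (WappS β η D z) : ℝ) := by
  have hsym : (Wlin β η D).IsSymmetric := fun u v => Wsym β η D u v
  have hn : Module.finrank ℝ (EucS m₁ m₂) = Fintype.card (Fin m₁ ⊕ Fin m₂) :=
    finrank_euclideanSpace
  set b := hsym.eigenvectorBasis hn with hb
  set μ := hsym.eigenvalues hn with hμ
  have happ : ∀ i, Wlin β η D (b i) = (μ i : ℝ) • b i := fun i =>
    hsym.apply_eigenvectorBasis hn i
  have hge : ∀ i, lam ≤ μ i := fun i =>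
    hlb _ ⟨b i, b.toBasis.ne_zero i, by exact happ i⟩
  have h1 : (inner ℝ z (WappS β η D z) : ℝ) = ∑ i, μ i * (inner ℝ z (b i) : ℝ) ^ 2 := by
    have := b.sum_inner_mul_inner z (WappS β η D z)
    rw [← this]
    refine Finset.sum_congr rfl fun i _ => ?_
    have h2 : (inner ℝ (b i) (WappS β η D z) : ℝ) = μ i * inner ℝ (b i) z :=
      calc (inner ℝ (b i) (WappS β η D z) : ℝ) = inner ℝ ((Wlin β η D) (b i)) z :=
            (hsym (b i) z).symm
        _ = inner ℝ ((μ i : ℝ) • b i) z := by rw [happ i]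
        _ = μ i * inner ℝ (b i) z := real_inner_smul_left _ _ _
    rw [h2, real_inner_comm (b i) z]; ring
  have h2 : ‖z‖ ^ 2 = ∑ i, (inner ℝ z (b i) : ℝ) ^ 2 := by
    have := b.sum_inner_mul_inner z z
    rw [← real_inner_self_eq_norm_sq, ← this]
    refine Finset.sum_congr rfl fun i _ => ?_
    rw [real_inner_comm (b i) z]; ring
  rw [h1, h2, Finset.mul_sum]
  refine Finset.sum_le_sum fun i _ => ?_
  exact mul_le_mul_of_nonneg_right (hge i) (sq_nonneg _)

section BH
variable {F : Type*} [NormedAddCommGroup F] [InnerProductSpace ℝ F] [CompleteSpace F]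
variable {r : F → ℝ} {L : ℝ}

lemma hasDerivAt_line (hr : Differentiable ℝ r) (x d : F) (t : ℝ) :
    HasDerivAt (fun s : ℝ => r (x + s • d))
      (inner ℝ (gradient r (x + t • d)) d : ℝ) t := by
  have h1 : HasGradientAt r (gradient r (x + t • d)) (x + t • d) :=
    (hr _).hasGradientAt
  have h2 := hasGradientAt_iff_hasFDerivAt.mp h1
  have h3 : HasDerivAt (fun s : ℝ => x + s • d) d t := by
    simpa using ((hasDerivAt_id t).smul_const d).const_add x
  have h4 := h2.comp_hasDerivAt t h3
  simp [Function.comp_def, InnerProductSpace.toDual_apply_apply] at h4 ⊢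
  exact h4

lemma grad_ineq_s13 (hr : Differentiable ℝ r) (hconv : ConvexOn ℝ Set.univ r) (x y : F) :
    r x + (inner ℝ (gradient r x) (y - x) : ℝ) ≤ r y := by
  set φ := fun t : ℝ => r (x + t • (y - x)) with hφ
  have hφc : ConvexOn ℝ Set.univ φ := by
    have heq : φ = (r ∘ AffineMap.lineMap x y) := funext fun t => by
      show r (x + t • (y - x)) = r (AffineMap.lineMap x y t)
      congr 1
      rw [AffineMap.lineMap_apply_module']
      abel
    rw [heq]
    simpa using hconv.comp_affineMap (AffineMap.lineMap x y)
  have hd : HasDerivAt φ (inner ℝ (gradient r x) (y - x) : ℝ) 0 := by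
    have := hasDerivAt_line hr x (y - x) 0
    simpa using this
  have := hφc.le_slope_of_hasDerivAt (Set.mem_univ 0) (Set.mem_univ 1) one_pos hd
  rw [slope_def_field] at this
  simp only [hφ] at this
  simp only [zero_smul, add_zero, one_smul] at this
  have hxy : x + (y - x) = y := by abel
  rw [hxy] at this
  have : (inner ℝ (gradient r x) (y - x) : ℝ) ≤ r y - r x := by
    calc (inner ℝ (gradient r x) (y - x) : ℝ) ≤ (r y - r x) / (1 - 0) := this
      _ = r y - r x := by norm_num
  linarith

lemma descent_lemma (hr : Differentiable ℝ r) (hL : 0 < L)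
    (hlip : ∀ a b : F, ‖gradient r a - gradient r b‖ ≤ L * ‖a - b‖) (x y : F) :
    r y ≤ r x + (inner ℝ (gradient r x) (y - x) : ℝ) + L / 2 * ‖y - x‖ ^ 2 := by
  set d := y - x with hd
  set φ := fun t : ℝ => r (x + t • d) with hφ
  set ψ := fun t : ℝ => φ t - t * (inner ℝ (gradient r x) d : ℝ) - L * ‖d‖ ^ 2 * t ^ 2 / 2 with hψ
  have hψd : ∀ t : ℝ, HasDerivAt ψ
      ((inner ℝ (gradient r (x + t • d)) d : ℝ) - (inner ℝ (gradient r x) d : ℝ)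
        - L * ‖d‖ ^ 2 * t) t := by
    intro t
    have h1 := hasDerivAt_line hr x d t
    have h2 : HasDerivAt (fun t : ℝ => t * (inner ℝ (gradient r x) d : ℝ))
        (inner ℝ (gradient r x) d : ℝ) t := by
      simpa using (hasDerivAt_id t).mul_const (inner ℝ (gradient r x) d : ℝ)
    have h3 : HasDerivAt (fun t : ℝ => L * ‖d‖ ^ 2 * t ^ 2 / 2) (L * ‖d‖ ^ 2 * t) t := by
      have h4 : HasDerivAt (fun t : ℝ => t ^ 2) (2 * t) t := by
        simpa using hasDerivAt_pow 2 t
      have h5 := (h4.const_mul (L * ‖d‖ ^ 2)).div_const 2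
      have e : L * ‖d‖ ^ 2 * t = L * ‖d‖ ^ 2 * (2 * t) / 2 := by ring
      rw [e]; exact h5
    exact (h1.sub h2).sub h3
  have hψdiff : Differentiable ℝ ψ := fun t => (hψd t).differentiableAt
  have hderiv : ∀ t : ℝ, deriv ψ t = (inner ℝ (gradient r (x + t • d)) d : ℝ)
      - (inner ℝ (gradient r x) d : ℝ) - L * ‖d‖ ^ 2 * t := fun t => (hψd t).deriv
  have hanti : AntitoneOn ψ (Set.Icc 0 1) := by
    apply antitoneOn_of_deriv_nonpos (convex_Icc 0 1) hψdiff.continuous.continuousOn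
      (hψdiff.differentiableOn)
    intro t ht
    rw [interior_Icc] at ht
    rw [hderiv t]
    have e1 : (inner ℝ (gradient r (x + t • d)) d : ℝ) - (inner ℝ (gradient r x) d : ℝ)
        = inner ℝ (gradient r (x + t • d) - gradient r x) d := by
      rw [inner_sub_left]
    rw [e1]
    have e2 : (inner ℝ (gradient r (x + t • d) - gradient r x) d : ℝ)
        ≤ ‖gradient r (x + t • d) - gradient r x‖ * ‖d‖ := real_inner_le_norm _ _
    have e3 : ‖gradient r (x + t • d) - gradient r x‖ ≤ L * ‖t • d‖ := by
      have := hlip (x + t • d) x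
      simpa using this
    have e4 : ‖t • d‖ = t * ‖d‖ := by
      rw [norm_smul, Real.norm_eq_abs, abs_of_pos ht.1]
    rw [e4] at e3
    have e5 : ‖gradient r (x + t • d) - gradient r x‖ * ‖d‖ ≤ L * (t * ‖d‖) * ‖d‖ :=
      mul_le_mul_of_nonneg_right e3 (norm_nonneg d)
    have e6 : L * (t * ‖d‖) * ‖d‖ = L * ‖d‖ ^ 2 * t := by ring
    linarith
  have h01 := hanti (Set.left_mem_Icc.2 zero_le_one) (Set.right_mem_Icc.2 zero_le_one)
    zero_le_one
  have hψ0 : ψ 0 = r x := by simp [hψ, hφ]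
  have hψ1 : ψ 1 = r y - (inner ℝ (gradient r x) d : ℝ) - L * ‖d‖ ^ 2 / 2 := by
    have h1d : x + d = y := by rw [hd]; abel
    simp [hψ, hφ, h1d]
  rw [hψ0, hψ1] at h01
  have hn : ‖y - x‖ = ‖d‖ := by rw [hd]
  rw [hn]
  linarith

lemma cocoercive (hr : Differentiable ℝ r) (hconv : ConvexOn ℝ Set.univ r) (hL : 0 < L)
    (hlip : ∀ a b : F, ‖gradient r a - gradient r b‖ ≤ L * ‖a - b‖) (x y : F) :
    ‖gradient r x - gradient r y‖ ^ 2
      ≤ L * (inner ℝ (gradient r x - gradient r y) (x - y) : ℝ) := by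
  have key : ∀ a b : F, r a + (inner ℝ (gradient r a) (b - a) : ℝ)
      + 1 / (2 * L) * ‖gradient r b - gradient r a‖ ^ 2 ≤ r b := by
    intro a b
    set g := gradient r with hg
    set u := b - (1 / L) • (g b - g a) with hu
    have h1 := grad_ineq_s13 hr hconv a u
    have h2 := descent_lemma hr hL hlip b u
    have hub : u - b = -((1 / L) • (g b - g a)) := by rw [hu]; abel
    have hnorm : ‖u - b‖ ^ 2 = (1 / L) ^ 2 * ‖g b - g a‖ ^ 2 := by
      rw [hub, norm_neg, norm_smul, Real.norm_eq_abs, mul_pow, sq_abs]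
    have hinner2 : (inner ℝ (g b) (u - b) : ℝ) = -(1 / L) * inner ℝ (g b) (g b - g a) := by
      rw [hub, inner_neg_right, real_inner_smul_right]
      ring
    have hinner1 : (inner ℝ (g a) (u - a) : ℝ)
        = inner ℝ (g a) (b - a) - (1 / L) * inner ℝ (g a) (g b - g a) := by
      have : u - a = (b - a) - (1 / L) • (g b - g a) := by rw [hu]; abel
      rw [this, inner_sub_right, real_inner_smul_right]
    rw [hinner1] at h1
    rw [hinner2, hnorm] at h2
    have hgg : (inner ℝ (g b) (g b - g a) : ℝ) - (inner ℝ (g a) (g b - g a) : ℝ)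
        = ‖g b - g a‖ ^ 2 := by
      rw [← inner_sub_left, real_inner_self_eq_norm_sq]
    have hLne : L ≠ 0 := ne_of_gt hL
    have expand : r a + (inner ℝ (g a) (b - a) : ℝ) + 1 / (2 * L) * ‖g b - g a‖ ^ 2 ≤ r b := by
      have c1 : r a + ((inner ℝ (g a) (b - a) : ℝ) - 1 / L * inner ℝ (g a) (g b - g a)) ≤ r u := h1
      have c2 : r u ≤ r b + -(1 / L) * (inner ℝ (g b) (g b - g a) : ℝ)
          + L / 2 * ((1 / L) ^ 2 * ‖g b - g a‖ ^ 2) := h2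
      have c3 : L / 2 * ((1 / L) ^ 2 * ‖g b - g a‖ ^ 2) = 1 / (2 * L) * ‖g b - g a‖ ^ 2 := by
        field_simp
      have hgg' : 1 / L * (inner ℝ (g b) (g b - g a) : ℝ)
          - 1 / L * (inner ℝ (g a) (g b - g a) : ℝ) = 1 / L * ‖g b - g a‖ ^ 2 := by
        rw [← mul_sub, hgg]
      have c4 : 1 / L * ‖g b - g a‖ ^ 2 = 2 * (1 / (2 * L) * ‖g b - g a‖ ^ 2) := by
        field_simp
      linarith [c1, c2, c3, hgg', c4]
    exact expand
  have k1 := key x y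
  have k2 := key y x
  set g := gradient r with hg
  have hsymm : ‖g x - g y‖ = ‖g y - g x‖ := norm_sub_rev _ _
  have hin : (inner ℝ (g x) (y - x) : ℝ) + (inner ℝ (g y) (x - y) : ℝ)
      = -(inner ℝ (g x - g y) (x - y) : ℝ) := by
    rw [inner_sub_left]
    have : (inner ℝ (g x) (y - x) : ℝ) = -(inner ℝ (g x) (x - y) : ℝ) := by
      rw [← inner_neg_right]; congr 1; abel
    rw [this]
    ring
  have hLpos : 0 < 2 * L := by linarith
  have : 1 / L * ‖g x - g y‖ ^ 2 ≤ (inner ℝ (g x - g y) (x - y) : ℝ) := by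
    rw [hsymm] at k2 ⊢
    have c5 : 1 / (2 * L) * ‖g y - g x‖ ^ 2 + 1 / (2 * L) * ‖g y - g x‖ ^ 2
        = 1 / L * ‖g y - g x‖ ^ 2 := by
      field_simp
      ring
    linarith [k1, k2, hin, c5]
  calc ‖g x - g y‖ ^ 2 = L * (1 / L * ‖g x - g y‖ ^ 2) := by field_simp
    _ ≤ L * (inner ℝ (g x - g y) (x - y) : ℝ) := by
        exact mul_le_mul_of_nonneg_left this hL.le
end BH


end Aux

/-- let r : ℝ^{m₁+m₂} → ℝ be convex, differentiable with L-Lipschitz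
gradient, and assume λ_min(W) > L/2.  With α = L/(2λ_min(W)) ∈ (0,1), the operator
Ñ = I − (1/α)W⁻¹∇r is nonexpansive with respect to W, and consequently
I − W⁻¹∇r = (1−α)I + αÑ is α-averaged nonexpansive with respect to W. -/


theorem stmt13 {m₁ m₂ : ℕ} (D : Matrix (Fin m₂) (Fin m₁) ℝ)
    (β η : ℝ) (hβ : 0 < β) (hη : 0 < η)
    (r : EucS m₁ m₂ → ℝ) (L : ℝ) (hL : 0 < L)
    (hrdiff : Differentiable ℝ r) (hrconv : ConvexOn ℝ Set.univ r)
    (hrlip : ∀ x y : EucS m₁ m₂, ‖gradient r x - gradient r y‖ ≤ L * ‖x - y‖)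
    (lammin : ℝ)
    (hlam : IsLeast {μ : ℝ | ∃ z : EucS m₁ m₂, z ≠ 0 ∧ WappS β η D z = μ • z} lammin)
    (hgt : L / 2 < lammin)
    (α : ℝ) (hα : α = L / (2 * lammin))
    (Winv : EucS m₁ m₂ → EucS m₁ m₂)
    (hWinv₁ : ∀ z, WappS β η D (Winv z) = z)
    (hWinv₂ : ∀ z, Winv (WappS β η D z) = z) :
    (0 < α ∧ α < 1) ∧
    (∀ x y : EucS m₁ m₂,
      normWS β η D ((x - (1 / α) • Winv (gradient r x)) -
          (y - (1 / α) • Winv (gradient r y))) ≤ normWS β η D (x - y)) ∧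
    (∀ z : EucS m₁ m₂,
      z - Winv (gradient r z) =
        (1 - α) • z + α • (z - (1 / α) • Winv (gradient r z))) ∧
    ∃ N : EucS m₁ m₂ → EucS m₁ m₂,
      (∀ x y : EucS m₁ m₂, normWS β η D (N x - N y) ≤ normWS β η D (x - y)) ∧
      ∀ z : EucS m₁ m₂, z - Winv (gradient r z) = (1 - α) • z + α • N z := by
  have hlampos : 0 < lammin := lt_trans (by positivity) hgt
  have hαpos : 0 < α := by rw [hα]; positivity
  have hα1 : α < 1 := by
    rw [hα, div_lt_one (by positivity)]
    linarith
  have hαne : α ≠ 0 := ne_of_gt hαpos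
  -- linearity facts
  have Wsub : ∀ a b : EucS m₁ m₂, WappS β η D (a - b) = WappS β η D a - WappS β η D b :=
    fun a b => map_sub (Wlin β η D) a b
  have Wsmul : ∀ (c : ℝ) (a : EucS m₁ m₂), WappS β η D (c • a) = c • WappS β η D a :=
    fun c a => map_smul (Wlin β η D) c a
  have WinvSub : ∀ a b : EucS m₁ m₂, Winv a - Winv b = Winv (a - b) := by
    intro a b
    have h1 : WappS β η D (Winv a - Winv b) = a - b := by
      rw [Wsub, hWinv₁, hWinv₁]
    calc Winv a - Winv b = Winv (WappS β η D (Winv a - Winv b)) := (hWinv₂ _).symm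
      _ = Winv (a - b) := by rw [h1]
  have hquad : ∀ z : EucS m₁ m₂, lammin * ‖z‖ ^ 2 ≤ (inner ℝ z (WappS β η D z) : ℝ) :=
    quad_lb β η D lammin (fun μ hμ => hlam.2 hμ)
  -- the nonexpansiveness
  have main : ∀ x y : EucS m₁ m₂,
      normWS β η D ((x - (1 / α) • Winv (gradient r x)) -
          (y - (1 / α) • Winv (gradient r y))) ≤ normWS β η D (x - y) := by
    intro x y
    set d := x - y with hdd
    set gd := gradient r x - gradient r y with hgd
    set u := Winv gd with huu
    set s := (1 : ℝ) / α with hs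
    have hspos : 0 < s := by rw [hs]; positivity
    have hWu : WappS β η D u = gd := hWinv₁ gd
    have hexp : (x - (1 / α) • Winv (gradient r x)) - (y - (1 / α) • Winv (gradient r y))
        = d - s • u := by
      rw [huu, hgd, ← WinvSub, smul_sub, hdd]
      abel
    rw [hexp]
    -- quadratic form expansion
    have hWform : WappS β η D (d - s • u) = WappS β η D d - s • gd := by
      rw [Wsub, Wsmul, hWu]
    have hsymud : (inner ℝ u (WappS β η D d) : ℝ) = inner ℝ gd d := by
      rw [← hWu]
      exact (Wsym β η D u d).symm
    have hexp2 : (inner ℝ (d - s • u) (WappS β η D (d - s • u)) : ℝ)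
        = inner ℝ d (WappS β η D d) - 2 * s * (inner ℝ gd d : ℝ) + s ^ 2 * (inner ℝ u gd : ℝ) := by
      rw [hWform, inner_sub_left, inner_sub_right, inner_sub_right,
        real_inner_smul_left, real_inner_smul_left, real_inner_smul_right,
        real_inner_smul_right, hsymud, real_inner_comm d gd]
      ring
    -- cocoercivity
    have hcoco : ‖gd‖ ^ 2 ≤ L * (inner ℝ gd d : ℝ) := by
      rw [hgd, hdd]
      exact cocoercive hrdiff hrconv hL hrlip x y
    -- bound on ⟪u, gd⟫
    have hubound : lammin * (inner ℝ u gd : ℝ) ≤ ‖gd‖ ^ 2 := by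
      have h1 : lammin * ‖u‖ ^ 2 ≤ (inner ℝ u gd : ℝ) := by
        have := hquad u
        rwa [hWu] at this
      have h2 : (inner ℝ u gd : ℝ) ≤ ‖u‖ * ‖gd‖ := real_inner_le_norm _ _
      have h3 : lammin * ‖u‖ ≤ ‖gd‖ := by
        rcases eq_or_lt_of_le (norm_nonneg u) with h0 | h0
        · rw [← h0, mul_zero]; exact norm_nonneg gd
        · have : lammin * ‖u‖ * ‖u‖ ≤ ‖gd‖ * ‖u‖ := by nlinarith
          exact le_of_mul_le_mul_right this h0
      calc lammin * (inner ℝ u gd : ℝ) ≤ lammin * (‖u‖ * ‖gd‖) :=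
            mul_le_mul_of_nonneg_left h2 hlampos.le
        _ = (lammin * ‖u‖) * ‖gd‖ := by ring
        _ ≤ ‖gd‖ * ‖gd‖ := mul_le_mul_of_nonneg_right h3 (norm_nonneg gd)
        _ = ‖gd‖ ^ 2 := by ring
    -- the key scalar inequality
    have hsval : s = 2 * lammin / L := by
      rw [hs, hα, one_div_div]
    have key : s ^ 2 * (inner ℝ u gd : ℝ) ≤ 2 * s * (inner ℝ gd d : ℝ) := by
      have hLne : L ≠ 0 := ne_of_gt hL
      calc s ^ 2 * (inner ℝ u gd : ℝ)
          = (4 * lammin / L ^ 2) * (lammin * (inner ℝ u gd : ℝ)) := by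
            rw [hsval]; field_simp; ring
        _ ≤ (4 * lammin / L ^ 2) * ‖gd‖ ^ 2 :=
            mul_le_mul_of_nonneg_left hubound (by positivity)
        _ ≤ (4 * lammin / L ^ 2) * (L * (inner ℝ gd d : ℝ)) :=
            mul_le_mul_of_nonneg_left hcoco (by positivity)
        _ = 2 * s * (inner ℝ gd d : ℝ) := by
            rw [hsval]; field_simp; ring
    have hle : (inner ℝ (d - s • u) (WappS β η D (d - s • u)) : ℝ)
        ≤ (inner ℝ d (WappS β η D d) : ℝ) := by
      rw [hexp2]; linarith
    exact Real.sqrt_le_sqrt hle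
  refine ⟨⟨hαpos, hα1⟩, main, ?_, ?_⟩
  · intro z
    have h1 : α • ((1 / α) • Winv (gradient r z)) = Winv (gradient r z) := by
      rw [smul_smul, mul_one_div, div_self hαne, one_smul]
    rw [smul_sub, h1, sub_smul, one_smul]
    abel
  · refine ⟨fun z => z - (1 / α) • Winv (gradient r z), main, fun z => ?_⟩
    have h1 : α • ((1 / α) • Winv (gradient r z)) = Winv (gradient r z) := by
      rw [smul_smul, mul_one_div, div_self hαne, one_smul]
    rw [smul_sub, h1, sub_smul, one_smul]
    abel
end
end

section
/- Consider the MPAERL model with τ > 0: minimize (1/T)‖R̃v‖₂² + τ‖Ĩv‖₁ over {v ∈ ℝ^{m₁} : Dv ≥ d componentwise}. If the feasible set {v : Dv ≥ d} is nonempty, then the objective is proper, lower semicontinuous, convex and coercive on the (closed convex) feasible set, and the model attains a minimizer. -/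
noncomputable section

open scoped BigOperators

/-- Matrix–vector multiplication for a general (finite) row index type. -/
def mVecG {I : Type} {q : ℕ} (A : I → Fin q → ℝ) (v : Euc q) : I → ℝ :=
  fun i => ∑ j, A i j * v j

def rowL {q : ℕ} (a : Fin q → ℝ) : Euc q →ₗ[ℝ] ℝ where
  toFun v := ∑ j, a j * v j
  map_add' x y := by simp [mul_add, Finset.sum_add_distrib]
  map_smul' c x := by
    simp only [RingHom.id_apply, smul_eq_mul, Finset.mul_sum, PiLp.smul_apply]
    exact Finset.sum_congr rfl fun j _ => by ring

def coordL {n : ℕ} (j : Fin n) : Euc n →ₗ[ℝ] ℝ where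
  toFun v := v j
  map_add' _ _ := rfl
  map_smul' _ _ := rfl

@[simp] lemma coordL_apply {n : ℕ} (j : Fin n) (v : Euc n) : coordL j v = v j := rfl

def mVecL {p q : ℕ} (A : Matrix (Fin p) (Fin q) ℝ) : Euc q →ₗ[ℝ] Euc p where
  toFun v := WithLp.toLp 2 (fun i => ∑ j, A i j * v j)
  map_add' x y := by ext i; simp [mul_add, Finset.sum_add_distrib]
  map_smul' c x := by
    ext i
    simp only [RingHom.id_apply, PiLp.smul_apply, smul_eq_mul, Finset.mul_sum, PiLp.toLp_apply]
    exact Finset.sum_congr rfl fun j _ => by ring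

lemma norm_le_sum_abs {n : ℕ} (v : Euc n) : ‖v‖ ≤ ∑ j, |v j| := by
  have hv : v = ∑ j : Fin n, EuclideanSpace.single j (v j) := by
    ext i
    have h := map_sum (coordL i) (fun j => EuclideanSpace.single j (v j)) Finset.univ
    simp only [coordL_apply] at h
    rw [h]
    simp [EuclideanSpace.single_apply]
  calc ‖v‖ = ‖∑ j : Fin n, EuclideanSpace.single j (v j)‖ := by rw [← hv]
    _ ≤ ∑ j : Fin n, ‖EuclideanSpace.single j (v j)‖ := norm_sum_le _ _
    _ = ∑ j, |v j| := by simp [EuclideanSpace.norm_single, Real.norm_eq_abs]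

lemma my_convexOn_sum {n : ℕ} {ι : Type*} (t : Finset ι) (f : ι → Euc n → ℝ)
    (h : ∀ i ∈ t, ConvexOn ℝ Set.univ (f i)) :
    ConvexOn ℝ Set.univ (fun v => ∑ i ∈ t, f i v) := by
  classical
  induction t using Finset.induction with
  | empty => simpa using convexOn_const (0:ℝ) convex_univ
  | @insert a s ha ih =>
    simp only [Finset.sum_insert ha]
    exact (h a (Finset.mem_insert_self _ _)).add
      (ih fun i hi => h i (Finset.mem_insert_of_mem hi))

/-- the MPAERL model with τ > 0.  With R̃ = (R, −1_T), Ĩ deleting the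
last coordinate, μ̂ = (1/T)Rᵀ1_T, A = [[μ̂ᵀ, −1],[1ᵀ, 0]], b = (0,1)ᵀ,
B = [[0ᵀ, 1],[0ᵀ, −1]], c = (ρ₁, −ρ₂)ᵀ, D = [A; −A; B] and d = (b; −b; c), if the
feasible set {v | Dv ≥ d} is nonempty then the objective
v ↦ (1/T)‖R̃v‖² + τ‖Ĩv‖₁ is lower semicontinuous, convex and coercive on the
closed convex feasible set, and the model attains a minimizer. -/
theorem stmt15 (T N : ℕ) (hT : 0 < T) (hN : 0 < N)
    (R : Matrix (Fin T) (Fin N) ℝ) (τ : ℝ) (hτ : 0 < τ)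
    (ρ₁ ρ₂ : ℝ) (hρ₁ : 0 < ρ₁) (hρ₁₂ : ρ₁ ≤ ρ₂)
    (Rt : Matrix (Fin T) (Fin (N + 1)) ℝ)
    (hRt : ∀ t j, Rt t j = if h : (j : ℕ) < N then R t ⟨j, h⟩ else -1)
    (μ : Fin N → ℝ) (hμ : ∀ j, μ j = (1 / (T : ℝ)) * ∑ t, R t j)
    (A : Matrix (Fin 2) (Fin (N + 1)) ℝ)
    (hA : ∀ j, (A 0 j = if h : (j : ℕ) < N then μ ⟨j, h⟩ else -1) ∧
               (A 1 j = if (j : ℕ) < N then 1 else 0))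
    (b : Fin 2 → ℝ) (hb : b = ![0, 1])
    (B : Matrix (Fin 2) (Fin (N + 1)) ℝ)
    (hB : ∀ i j, B i j = if (j : ℕ) = N then (if i = 0 then 1 else -1) else 0)
    (c : Fin 2 → ℝ) (hc : c = ![ρ₁, -ρ₂])
    (D : (Fin 2 ⊕ Fin 2 ⊕ Fin 2) → Fin (N + 1) → ℝ)
    (hD : D = Sum.elim A (Sum.elim (-A) B))
    (d : (Fin 2 ⊕ Fin 2 ⊕ Fin 2) → ℝ)
    (hd : d = Sum.elim b (Sum.elim (-b) c))
    (obj : Euc (N + 1) → ℝ)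
    (hobj : ∀ v, obj v =
      (1 / (T : ℝ)) * ‖mVec Rt v‖ ^ 2 + τ * ∑ i : Fin N, |v (Fin.castSucc i)|)
    (feas : Set (Euc (N + 1)))
    (hfeas : feas = {v : Euc (N + 1) | ∀ i, d i ≤ mVecG D v i})
    (hne : feas.Nonempty) :
    IsClosed feas ∧ Convex ℝ feas ∧
    LowerSemicontinuousOn obj feas ∧ ConvexOn ℝ feas obj ∧
    (∀ cc : ℝ, ∃ M : ℝ, ∀ v ∈ feas, M ≤ ‖v‖ → cc ≤ obj v) ∧
    ∃ vmin ∈ feas, ∀ v ∈ feas, obj vmin ≤ obj v := by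
  classical
  -- the feasible set as an intersection of halfspaces
  have hfeas' : feas = ⋂ i, {v : Euc (N + 1) | d i ≤ rowL (D i) v} := by
    rw [hfeas]; ext v; simp [Set.mem_iInter, rowL, mVecG]
  -- closedness
  have hclosed : IsClosed feas := by
    rw [hfeas']
    exact isClosed_iInter fun i =>
      isClosed_le continuous_const (rowL (D i)).continuous_of_finiteDimensional
  -- convexity of the feasible set
  have hconv : Convex ℝ feas := by
    rw [hfeas']
    exact convex_iInter fun i => convex_halfSpace_ge (rowL (D i)).isLinear (d i)
  -- continuity of the objective
  have hcont : Continuous obj := by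
    have hfun : obj = fun v =>
        (1 / (T : ℝ)) * ‖mVecL Rt v‖ ^ 2 + τ * ∑ i : Fin N, |v (Fin.castSucc i)| :=
      funext hobj
    rw [hfun]
    refine Continuous.add ?_ ?_
    · exact continuous_const.mul (((mVecL Rt).continuous_of_finiteDimensional).norm.pow 2)
    · exact continuous_const.mul (continuous_finset_sum _ fun i _ =>
        ((coordL (Fin.castSucc i)).continuous_of_finiteDimensional).abs)
  -- convexity of the objective
  have hconvObj : ConvexOn ℝ feas obj := by
    have hfun : obj = fun v =>
        (1 / (T : ℝ)) * ‖mVecL Rt v‖ ^ 2 + τ * ∑ i : Fin N, |v (Fin.castSucc i)| :=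
      funext hobj
    rw [hfun]
    have h1 : ConvexOn ℝ Set.univ (fun v : Euc (N + 1) => ‖mVecL Rt v‖) := by
      have := (convexOn_univ_norm (E := Euc T)).comp_linearMap (mVecL Rt)
      exact this
    have h2 : ConvexOn ℝ Set.univ (fun v : Euc (N + 1) => ‖mVecL Rt v‖ ^ 2) := by
      refine ⟨convex_univ, fun x _ y _ a b ha hb hab => ?_⟩
      simp only [smul_eq_mul]
      have hL : ‖mVecL Rt (a • x + b • y)‖ ≤ a * ‖mVecL Rt x‖ + b * ‖mVecL Rt y‖ := by
        rw [map_add, map_smul, map_smul]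
        calc ‖a • mVecL Rt x + b • mVecL Rt y‖
            ≤ ‖a • mVecL Rt x‖ + ‖b • mVecL Rt y‖ := norm_add_le _ _
          _ = a * ‖mVecL Rt x‖ + b * ‖mVecL Rt y‖ := by
              rw [norm_smul, norm_smul, Real.norm_eq_abs, Real.norm_eq_abs,
                abs_of_nonneg ha, abs_of_nonneg hb]
      have hnn : (0:ℝ) ≤ ‖mVecL Rt (a • x + b • y)‖ := norm_nonneg _
      have hsq : ‖mVecL Rt (a • x + b • y)‖ ^ 2
          ≤ (a * ‖mVecL Rt x‖ + b * ‖mVecL Rt y‖) ^ 2 := by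
        exact pow_le_pow_left₀ hnn hL 2
      nlinarith [sq_nonneg (‖mVecL Rt x‖ - ‖mVecL Rt y‖), mul_nonneg ha hb]
    have h3 : ConvexOn ℝ Set.univ
        (fun v : Euc (N + 1) => ∑ i : Fin N, |v (Fin.castSucc i)|) := by
      refine my_convexOn_sum Finset.univ _ fun i _ => ?_
      have := (convexOn_univ_norm (E := ℝ)).comp_linearMap (coordL (Fin.castSucc i))
      exact this
    have h4 : ConvexOn ℝ Set.univ (fun v : Euc (N + 1) =>
        (1 / (T : ℝ)) * ‖mVecL Rt v‖ ^ 2 + τ * ∑ i : Fin N, |v (Fin.castSucc i)|) := by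
      refine ConvexOn.add ?_ ?_
      · have := h2.smul (c := (1 / (T : ℝ))) (by positivity)
        simpa [smul_eq_mul] using this
      · have := h3.smul (c := τ) hτ.le
        simpa [smul_eq_mul] using this
    exact h4.subset (Set.subset_univ _) hconv
  -- bounds on the last coordinate, from feasibility
  have hlast : ∀ v ∈ feas, ρ₁ ≤ v (Fin.last N) ∧ v (Fin.last N) ≤ ρ₂ := by
    intro v hv
    rw [hfeas] at hv
    have h1 := hv (Sum.inr (Sum.inr 0))
    have h2 := hv (Sum.inr (Sum.inr 1))
    have hsum0 : ∑ j, B 0 j * v j = v (Fin.last N) := by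
      rw [Finset.sum_eq_single (Fin.last N)]
      · rw [hB]; simp
      · intro j _ hj
        rw [hB]
        have hj' : (j : ℕ) ≠ N := fun h => hj (Fin.ext h)
        simp [hj']
      · simp
    have hsum1 : ∑ j, B 1 j * v j = -v (Fin.last N) := by
      rw [Finset.sum_eq_single (Fin.last N)]
      · rw [hB]; norm_num
      · intro j _ hj
        rw [hB]
        have hj' : (j : ℕ) ≠ N := fun h => hj (Fin.ext h)
        simp [hj']
      · simp
    simp only [hD, hd, hc, mVecG, Sum.elim_inr] at h1 h2
    replace h1 : ![ρ₁, -ρ₂] 0 ≤ v (Fin.last N) := by rw [← hsum0]; exact h1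
    replace h2 : ![ρ₁, -ρ₂] 1 ≤ -v (Fin.last N) := by rw [← hsum1]; exact h2
    simp at h1 h2
    exact ⟨h1, by linarith⟩
  -- key coercivity bound
  have key : ∀ v ∈ feas, τ * (‖v‖ - ρ₂) ≤ obj v := by
    intro v hv
    obtain ⟨ha, hb'⟩ := hlast v hv
    have habs : |v (Fin.last N)| ≤ ρ₂ := abs_le.2 ⟨by linarith, hb'⟩
    have hn : ‖v‖ ≤ ∑ j, |v j| := norm_le_sum_abs v
    have hsplit : ∑ j : Fin (N + 1), |v j|
        = (∑ i : Fin N, |v (Fin.castSucc i)|) + |v (Fin.last N)| :=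
      Fin.sum_univ_castSucc _
    have h0 : 0 ≤ (1 / (T : ℝ)) * ‖mVec Rt v‖ ^ 2 := by positivity
    have hS : ‖v‖ - ρ₂ ≤ ∑ i : Fin N, |v (Fin.castSucc i)| := by
      rw [hsplit] at hn; linarith
    have := mul_le_mul_of_nonneg_left hS hτ.le
    rw [hobj v]; linarith
  refine ⟨hclosed, hconv, hcont.lowerSemicontinuous.lowerSemicontinuousOn feas,
    hconvObj, ?_, ?_⟩
  · -- coercivity
    intro cc
    refine ⟨ρ₂ + |cc| / τ, fun v hv hMv => ?_⟩
    have h1 : |cc| / τ ≤ ‖v‖ - ρ₂ := by linarith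
    have h2 := mul_le_mul_of_nonneg_left h1 hτ.le
    rw [mul_div_cancel₀ _ hτ.ne'] at h2
    have := key v hv
    have := le_abs_self cc
    linarith
  · -- existence of a minimizer
    obtain ⟨v₀, hv₀⟩ := hne
    set Mr : ℝ := max (ρ₂ + obj v₀ / τ) ‖v₀‖ with hMr
    set K : Set (Euc (N + 1)) := feas ∩ Metric.closedBall 0 Mr with hK
    have hv₀K : v₀ ∈ K :=
      ⟨hv₀, mem_closedBall_zero_iff.2 (le_max_right _ _)⟩
    have hKc : IsCompact K :=
      (isCompact_closedBall (0 : Euc (N + 1)) Mr).inter_left hclosed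
    obtain ⟨vmin, hvminK, hmin⟩ := hKc.exists_isMinOn ⟨v₀, hv₀K⟩ hcont.continuousOn
    refine ⟨vmin, hvminK.1, fun v hv => ?_⟩
    by_cases hcase : ‖v‖ ≤ Mr
    · exact isMinOn_iff.1 hmin v ⟨hv, mem_closedBall_zero_iff.2 hcase⟩
    · push_neg at hcase
      have h1 : ρ₂ + obj v₀ / τ ≤ ‖v‖ := le_trans (le_max_left _ _) hcase.le
      have h2 := key v hv
      have h3 : obj v₀ ≤ obj v := by
        have h4 := mul_le_mul_of_nonneg_left
          (show obj v₀ / τ ≤ ‖v‖ - ρ₂ by linarith) hτ.le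
        rw [mul_div_cancel₀ _ hτ.ne'] at h4
        linarith
      have h5 : obj vmin ≤ obj v₀ := isMinOn_iff.1 hmin v₀ hv₀K
      linarith
end
end
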